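/- Let D be a tight multipartite tournament whose maximum anti-{1,2}-competing sets have size exactly two. Then the complement of the (1,2)-step competition graph C_{1,2}(D) is one of the following: (A) a star graph together with possibly some isolated vertices; (B) a double-star graph together with possibly some isolated vertices; (C) a disjoint union of at least two star graphs together with possibly some isolated vertices; (D) a caterpillar having at least one vertex of degree 2 together with possibly some isolated vertices. -/

import Mathlib

/-- Adjacency in the (1,2)-step competition graph `C_{1,2}(D)` of the (simple) digraph `D`
with arc relation `A`: there is a vertex `w` distinct from `u` and `v` such that either
(`d_{D-v}(u,w) ≤ 1` and `d_{D-u}(v,w) ≤ 2`) or (`d_{D-u}(v,w) ≤ 1` and `d_{D-v}(u,w) ≤ 2`). -/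
def CompAdj {V : Type*} (A : V → V → Prop) (u v : V) : Prop :=
  u ≠ v ∧ ∃ w, w ≠ u ∧ w ≠ v ∧
    ((A u w ∧ (A v w ∨ ∃ z, z ≠ u ∧ A v z ∧ A z w)) ∨
     (A v w ∧ (A u w ∨ ∃ z, z ≠ v ∧ A u z ∧ A z w)))

/-- The (1,2)-step competition graph `C_{1,2}(D)` of the digraph with arc relation `A`. -/
def compGraph {V : Type*} (A : V → V → Prop) : SimpleGraph V where
  Adj := CompAdj A
  symm := by
    constructor
    rintro u v ⟨hne, w, h1, h2, h3⟩
    exact ⟨hne.symm, w, h2, h1, h3.symm⟩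
  loopless := by constructor; rintro u ⟨hne, -⟩; exact hne rfl

/-- Vertices `u` and `v` `(1,2)`-compete in the digraph with arc relation `A`: there is a
vertex `w` distinct from `u` and `v` such that either (`u → w` and there is a directed path
of length 2 from `v` to `w` not traversing `u`) or vice versa. -/
def OneTwoCompete {V : Type*} (A : V → V → Prop) (u v : V) : Prop :=
  ∃ w, w ≠ u ∧ w ≠ v ∧
    ((A u w ∧ ∃ z, z ≠ u ∧ A v z ∧ A z w) ∨
     (A v w ∧ ∃ z, z ≠ v ∧ A u z ∧ A z w))

/-- `A` is an orientation of the complete multipartite graph whose parts are the fibres of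
`p : V → ι`: no arcs within a part, and exactly one arc between any two vertices in
different parts. -/
def IsCompleteMultipartiteOrientation {V ι : Type*} (A : V → V → Prop) (p : V → ι) : Prop :=
  (∀ u v : V, p u = p v → ¬ A u v) ∧
  ∀ u v : V, p u ≠ p v → (A u v ∨ A v u) ∧ ¬ (A u v ∧ A v u)

/-- A multipartite tournament: an orientation of a complete `k`-partite graph with `k ≥ 3`,
whose partite sets are the (nonempty) fibres of `p : V → ι`. -/
def IsMultipartiteTournament {V ι : Type*} [Fintype ι] (A : V → V → Prop) (p : V → ι) : Prop :=
  Function.Surjective p ∧ 3 ≤ Fintype.card ι ∧ IsCompleteMultipartiteOrientation A p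

/-- A multipartite tournament is tight if every partite set is a clique in `C_{1,2}(D)`. -/
def IsTight {V ι : Type*} (A : V → V → Prop) (p : V → ι) : Prop :=
  ∀ u v : V, u ≠ v → p u = p v → CompAdj A u v

/-- A tournament: an orientation of a complete graph. -/
def IsTournament {V : Type*} (A : V → V → Prop) : Prop :=
  (∀ u, ¬ A u u) ∧ ∀ u v : V, u ≠ v → (A u v ∨ A v u) ∧ ¬ (A u v ∧ A v u)

/-- A star graph `K_{1,m}` (with center `c`) together with possibly some isolated
vertices. -/
def IsStarPlusIsolated {V : Type*} (G : SimpleGraph V) : Prop :=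
  ∃ c : V, (∃ x, G.Adj c x) ∧ ∀ x y : V, G.Adj x y → x = c ∨ y = c

/-- A double-star (a tree with exactly two vertices of degree at least two, namely the two
adjacent centers `c₁`, `c₂`) together with possibly some isolated vertices. -/
def IsDoubleStarPlusIsolated {V : Type*} (G : SimpleGraph V) : Prop :=
  ∃ c₁ c₂ : V, G.Adj c₁ c₂ ∧
    (∀ x y : V, G.Adj x y → x = c₁ ∨ y = c₁ ∨ x = c₂ ∨ y = c₂) ∧
    (∀ x : V, ¬ (G.Adj c₁ x ∧ G.Adj c₂ x)) ∧
    (∃ x, x ≠ c₂ ∧ G.Adj c₁ x) ∧ (∃ y, y ≠ c₁ ∧ G.Adj c₂ y)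

/-- A disjoint union of at least two star graphs (with centers the set `C`) together with
possibly some isolated vertices. -/
def IsDisjointStarsPlusIsolated {V : Type*} (G : SimpleGraph V) : Prop :=
  ∃ C : Finset V, 2 ≤ C.card ∧
    (∀ c ∈ C, ∃ x, G.Adj c x) ∧
    (∀ x y : V, G.Adj x y → (x ∈ C ∧ y ∉ C) ∨ (x ∉ C ∧ y ∈ C)) ∧
    (∀ x : V, ∀ c₁ ∈ C, ∀ c₂ ∈ C, G.Adj x c₁ → G.Adj x c₂ → c₁ = c₂)

/-- A caterpillar (a tree in which all vertices are within distance 1 of a central path,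
here the spine `q 0, q 1, …`) together with possibly some isolated vertices. -/
def IsCaterpillarPlusIsolated {V : Type*} (G : SimpleGraph V) : Prop :=
  ∃ (m : ℕ) (q : Fin m → V), Function.Injective q ∧
    (∀ i j : Fin m, G.Adj (q i) (q j) ↔ (i.val + 1 = j.val ∨ j.val + 1 = i.val)) ∧
    (∀ x y : V, G.Adj x y → (∃ i, q i = x) ∨ (∃ i, q i = y)) ∧
    (∀ x : V, (∀ i, q i ≠ x) → ∀ i j : Fin m, G.Adj x (q i) → G.Adj x (q j) → i = j)

section Helpers
variable {V : Type*} {ι : Type*}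

def N1 (A : V → V → Prop) (u v : V) : Prop :=
  ∀ w, w ≠ u → w ≠ v → A u w → A v w → False

def N2 (A : V → V → Prop) (u v : V) : Prop :=
  ∀ w z, w ≠ u → w ≠ v → z ≠ u → A u w → A v z → A z w → False

variable {A : V → V → Prop} {p : V → ι}

lemma compAdj_symm {u v : V} (h : CompAdj A u v) : CompAdj A v u := by
  obtain ⟨hne, w, h1, h2, h3⟩ := h
  exact ⟨hne.symm, w, h2, h1, h3.symm⟩

lemma nc1 {u v : V} (hne : u ≠ v) (h : ¬ CompAdj A u v) : N1 A u v :=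
  fun w hwu hwv h1 h2 => h ⟨hne, w, hwu, hwv, Or.inl ⟨h1, Or.inl h2⟩⟩

lemma nc2 {u v : V} (hne : u ≠ v) (h : ¬ CompAdj A u v) : N2 A u v :=
  fun w z hwu hwv hzu h1 h2 h3 => h ⟨hne, w, hwu, hwv, Or.inl ⟨h1, Or.inr ⟨z, hzu, h2, h3⟩⟩⟩

lemma arcNePart (hno : ∀ u v : V, p u = p v → ¬ A u v) {i j : V} (h : A i j) :
    p i ≠ p j := fun he => hno i j he h

lemma arcAsymm (hno : ∀ u v : V, p u = p v → ¬ A u v)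
    (harc : ∀ u v : V, p u ≠ p v → (A u v ∨ A v u) ∧ ¬ (A u v ∧ A v u))
    {i j : V} (h : A i j) : ¬ A j i :=
  fun h' => (harc i j (arcNePart hno h)).2 ⟨h, h'⟩

lemma arcTotal (harc : ∀ u v : V, p u ≠ p v → (A u v ∨ A v u) ∧ ¬ (A u v ∧ A v u))
    {i j : V} (hne : p i ≠ p j) (h : ¬ A i j) : A j i :=
  ((harc i j hne).1).resolve_left h

lemma sameOfNoArcs (harc : ∀ u v : V, p u ≠ p v → (A u v ∨ A v u) ∧ ¬ (A u v ∧ A v u))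
    {i j : V} (h1 : ¬ A i j) (h2 : ¬ A j i) : p i = p j := by
  by_contra hne
  rcases (harc i j hne).1 with h | h
  · exact h1 h
  · exact h2 h

end Helpers

set_option linter.unusedVariables false

section Generated
variable {V : Type*} {ι : Type*} {A : V → V → Prop} {p : V → ι}

lemma g2w1
    (hno : ∀ u v : V, p u = p v → ¬ A u v)
    (harc : ∀ u v : V, p u ≠ p v → (A u v ∨ A v u) ∧ ¬ (A u v ∧ A v u))
    (a b c w : V)
    (ne_a_b : a ≠ b)
    (ne_a_c : a ≠ c)
    (ne_a_w : a ≠ w)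
    (ne_b_c : b ≠ c)
    (ne_b_w : b ≠ w)
    (ne_c_w : c ≠ w)
    (nabp : p a ≠ p b)
    (nab1 : N1 A a b) (nab2 : N2 A a b) (nab2s : N2 A b a)
    (nbcp : p b ≠ p c)
    (nbc1 : N1 A b c) (nbc2 : N2 A b c) (nbc2s : N2 A c b)
    (ha1 : A b a)
    (ha2 : A b c)
    (ha3 : A a w)
    (ha4 : A c w)
    : False := by
  have hp1 : p a ≠ p b := nabp
  have hp2 : p b ≠ p c := nbcp
  have h3 : A b a := ha1
  have h4 : A b c := ha2
  have h5 : A a w := ha3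
  have h6 : A c w := ha4
  have h7 : ¬ A w a := arcAsymm hno harc h5
  have hp8 : p a ≠ p w := arcNePart hno h5
  have h9 : ¬ A a b := arcAsymm hno harc h3
  have h10 : ¬ A c b := arcAsymm hno harc h4
  have h11 : ¬ A w c := arcAsymm hno harc h6
  have hp12 : p c ≠ p w := arcNePart hno h6
  have h13 : ¬ A a c := fun hh => nab1 c ne_a_c.symm ne_b_c.symm hh h4
  have h14 : ¬ A b w := fun hh => nab1 w ne_a_w.symm ne_b_w.symm h5 hh
  exact (nab2 w c ne_a_w.symm ne_b_w.symm ne_a_c.symm h5 h4 h6)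


lemma g2w2
    (hno : ∀ u v : V, p u = p v → ¬ A u v)
    (harc : ∀ u v : V, p u ≠ p v → (A u v ∨ A v u) ∧ ¬ (A u v ∧ A v u))
    (a b c w z : V)
    (ne_a_b : a ≠ b)
    (ne_a_c : a ≠ c)
    (ne_a_w : a ≠ w)
    (ne_a_z : a ≠ z)
    (ne_b_c : b ≠ c)
    (ne_b_w : b ≠ w)
    (ne_b_z : b ≠ z)
    (ne_c_w : c ≠ w)
    (ne_c_z : c ≠ z)
    (ne_w_z : w ≠ z)
    (nabp : p a ≠ p b)
    (nab1 : N1 A a b) (nab2 : N2 A a b) (nab2s : N2 A b a)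
    (nbcp : p b ≠ p c)
    (nbc1 : N1 A b c) (nbc2 : N2 A b c) (nbc2s : N2 A c b)
    (ha1 : A b a)
    (ha2 : A b c)
    (ha3 : A a w)
    (ha4 : A c z)
    (ha5 : A z w)
    : False := by
  have hp1 : p a ≠ p b := nabp
  have hp2 : p b ≠ p c := nbcp
  have h3 : A b a := ha1
  have h4 : A b c := ha2
  have h5 : A a w := ha3
  have h6 : A c z := ha4
  have h7 : A z w := ha5
  have h8 : ¬ A w a := arcAsymm hno harc h5
  have hp9 : p a ≠ p w := arcNePart hno h5
  have h10 : ¬ A a b := arcAsymm hno harc h3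
  have h11 : ¬ A c b := arcAsymm hno harc h4
  have h12 : ¬ A z c := arcAsymm hno harc h6
  have hp13 : p c ≠ p z := arcNePart hno h6
  have h14 : ¬ A w z := arcAsymm hno harc h7
  have hp15 : p w ≠ p z := Ne.symm (arcNePart hno h7)
  have h16 : ¬ A a c := fun hh => nab1 c ne_a_c.symm ne_b_c.symm hh h4
  have h17 : ¬ A b w := fun hh => nab1 w ne_a_w.symm ne_b_w.symm h5 hh
  have h18 : ¬ A c w := fun hh => nab2 w c ne_a_w.symm ne_b_w.symm ne_a_c.symm h5 h4 hh
  have h19 : ¬ A b z := fun hh => nab2 w z ne_a_w.symm ne_b_w.symm ne_a_z.symm h5 hh h7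
  have h20 : ¬ A a z := fun hh => nab2 z c ne_a_z.symm ne_b_z.symm ne_a_c.symm hh h4 h6
  have h21 : ¬ A w c := fun hh => nab2s c w ne_b_c.symm ne_a_c.symm ne_b_w.symm h4 h5 hh
  have h22 : ¬ A c a := fun hh => nbc1 a ne_a_b ne_a_c h3 hh
  have h23 : ¬ A z a := fun hh => nbc2 a z ne_a_b ne_a_c ne_b_z.symm h3 h6 hh
  have hp24 : p a = p c := sameOfNoArcs harc h16 h22
  have hp25 : p a = p z := sameOfNoArcs harc h20 h23
  have hp26 : p c = p w := sameOfNoArcs harc h18 h21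
  exact ((hp13) ((hp24).symm.trans hp25))


lemma g4ca
    (hno : ∀ u v : V, p u = p v → ¬ A u v)
    (harc : ∀ u v : V, p u ≠ p v → (A u v ∨ A v u) ∧ ¬ (A u v ∧ A v u))
    (a b c x y : V)
    (ne_a_b : a ≠ b)
    (ne_a_c : a ≠ c)
    (ne_a_x : a ≠ x)
    (ne_a_y : a ≠ y)
    (ne_b_c : b ≠ c)
    (ne_b_x : b ≠ x)
    (ne_b_y : b ≠ y)
    (ne_c_x : c ≠ x)
    (ne_c_y : c ≠ y)
    (ne_x_y : x ≠ y)
    (nabp : p a ≠ p b)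
    (nab1 : N1 A a b) (nab2 : N2 A a b) (nab2s : N2 A b a)
    (nbcp : p b ≠ p c)
    (nbc1 : N1 A b c) (nbc2 : N2 A b c) (nbc2s : N2 A c b)
    (nxyp : p x ≠ p y)
    (nxy1 : N1 A x y) (nxy2 : N2 A x y) (nxy2s : N2 A y x)
    (ha1 : A a b)
    (ha2 : A b c)
    (ha3 : A x y)
    (ha4 : A c a)
    : False := by
  have hp1 : p a ≠ p b := nabp
  have hp2 : p b ≠ p c := nbcp
  have hp3 : p x ≠ p y := nxyp
  have h4 : A a b := ha1
  have h5 : A b c := ha2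
  have h6 : A x y := ha3
  have h7 : A c a := ha4
  have h8 : ¬ A b a := arcAsymm hno harc h4
  have h9 : ¬ A c b := arcAsymm hno harc h5
  have h10 : ¬ A a c := arcAsymm hno harc h7
  have hp11 : p a ≠ p c := Ne.symm (arcNePart hno h7)
  have h12 : ¬ A y x := arcAsymm hno harc h6
  by_cases hs13 : p a = p x
  · -- same part
    have hp14 : p a = p x := hs13
    have h15 : ¬ A a x := hno a x hp14
    have h16 : ¬ A x a := hno x a (hp14).symm
    have hp17 : p a ≠ p y := fun hh => (hp3) ((hp14).symm.trans hh)
    have hp18 : p b ≠ p x := Ne.symm (fun hh => (hp1) (((hp14).symm).symm.trans hh))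
    have hp19 : p c ≠ p x := Ne.symm (fun hh => (hp11) (((hp14).symm).symm.trans hh))
    by_cases hs20 : p b = p y
    · -- same part
      have hp21 : p b = p y := hs20
      have h22 : ¬ A b y := hno b y hp21
      have h23 : ¬ A y b := hno y b (hp21).symm
      have hp24 : p c ≠ p y := Ne.symm (fun hh => (hp2) (((hp21).symm).symm.trans hh))
      rcases (harc a y hp17).1 with ha25 | ha25
      · -- A a y
        have h26 : A a y := ha25
        have h27 : ¬ A y a := arcAsymm hno harc h26
        have h28 : ¬ A c y := fun hh => nab2 y c ne_a_y.symm ne_b_y.symm ne_a_c.symm h26 h5 hh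
        have h29 : ¬ A b x := fun hh => nab2 y x ne_a_y.symm ne_b_y.symm ne_a_x.symm h26 hh h6
        have h30 : ¬ A y c := fun hh => nab2s c y ne_b_c.symm ne_a_c.symm ne_b_y.symm h5 h26 hh
        have h31 : A x b := arcTotal harc hp18 h29
        exact (hp24 (sameOfNoArcs harc h28 h30))
      · -- A y a
        have h32 : A y a := ha25
        have h33 : ¬ A a y := arcAsymm hno harc h32
        have h34 : ¬ A x b := fun hh => nxy2 b a ne_b_x ne_b_y ne_a_x hh h32 h4
        have h35 : ¬ A x c := fun hh => nxy2s a c ne_a_y ne_a_x ne_c_y h32 hh h7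
        have h36 : A b x := arcTotal harc (hp18).symm h34
        have h37 : A c x := arcTotal harc (hp19).symm h35
        exact (nbc1 x ne_b_x.symm ne_c_x.symm h36 h37)
    · -- different parts
      have hp38 : p b ≠ p y := hs20
      rcases (harc b y hp38).1 with ha39 | ha39
      · -- A b y
        have h40 : A b y := ha39
        have h41 : ¬ A y b := arcAsymm hno harc h40
        have h42 : ¬ A a y := fun hh => nab1 y ne_a_y.symm ne_b_y.symm hh h40
        have h43 : ¬ A c y := fun hh => nbc1 y ne_b_y.symm ne_c_y.symm h40 hh
        have h44 : ¬ A c x := fun hh => nbc2 y x ne_b_y.symm ne_c_y.symm ne_b_x.symm h40 hh h6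
        have h45 : ¬ A y a := fun hh => nbc2s a y ne_a_c ne_a_b ne_c_y.symm h7 h40 hh
        exact (hp17 (sameOfNoArcs harc h42 h45))
      · -- A y b
        have h46 : A y b := ha39
        have h47 : ¬ A b y := arcAsymm hno harc h46
        have h48 : ¬ A x b := fun hh => nxy1 b ne_b_x ne_b_y hh h46
        have h49 : ¬ A x c := fun hh => nxy2 c b ne_c_x ne_c_y ne_b_x hh h46 h5
        have h50 : A b x := arcTotal harc (hp18).symm h48
        have h51 : A c x := arcTotal harc (hp19).symm h49
        have h52 : ¬ A a y := fun hh => nab2 y x ne_a_y.symm ne_b_y.symm ne_a_x.symm hh h50 h6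
        exact (nbc1 x ne_b_x.symm ne_c_x.symm h50 h51)
  · -- different parts
    have hp53 : p a ≠ p x := hs13
    rcases (harc a x hp53).1 with ha54 | ha54
    · -- A a x
      have h55 : A a x := ha54
      have h56 : ¬ A x a := arcAsymm hno harc h55
      have h57 : ¬ A b x := fun hh => nab1 x ne_a_x.symm ne_b_x.symm h55 hh
      have h58 : ¬ A c x := fun hh => nab2 x c ne_a_x.symm ne_b_x.symm ne_a_c.symm h55 h5 hh
      have h59 : ¬ A x c := fun hh => nab2s c x ne_b_c.symm ne_a_c.symm ne_b_x.symm h5 h55 hh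
      have h60 : ¬ A b y := fun hh => nab2s y x ne_b_y.symm ne_a_y.symm ne_b_x.symm hh h55 h6
      have hp61 : p c = p x := sameOfNoArcs harc h58 h59
      have hp62 : p c ≠ p y := fun hh => (hp3) ((hp61).symm.trans hh)
      have hp63 : p b ≠ p x := Ne.symm (fun hh => ((hp2).symm) (((hp61).symm).symm.trans hh))
      have h64 : A x b := arcTotal harc hp63 h57
      have h65 : ¬ A y b := fun hh => nxy1 b ne_b_x ne_b_y h64 hh
      have h66 : ¬ A y a := fun hh => nxy2 b a ne_b_x ne_b_y ne_a_x h64 hh h4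
      have h67 : ¬ A y c := fun hh => nxy2s c b ne_c_y ne_c_x ne_b_y hh h64 h5
      have hp68 : p b = p y := sameOfNoArcs harc h60 h65
      have h69 : A c y := arcTotal harc (hp62).symm h67
      have hp70 : p a ≠ p y := Ne.symm (fun hh => ((hp1).symm) (((hp68).symm).symm.trans hh))
      have h71 : ¬ A a y := fun hh => nab2 y c ne_a_y.symm ne_b_y.symm ne_a_c.symm hh h5 h69
      exact (hp70 (sameOfNoArcs harc h71 h66))
    · -- A x a
      have h72 : A x a := ha54
      have h73 : ¬ A a x := arcAsymm hno harc h72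
      have h74 : ¬ A b x := fun hh => nbc2s a x ne_a_c ne_a_b ne_c_x.symm h7 hh h72
      have h75 : ¬ A y a := fun hh => nxy1 a ne_a_x ne_a_y h72 hh
      have h76 : ¬ A y c := fun hh => nxy2 a c ne_a_x ne_a_y ne_c_x h72 hh h7
      have h77 : ¬ A y b := fun hh => nxy2s b a ne_b_y ne_b_x ne_a_y hh h72 h4
      by_cases hs78 : p a = p y
      · -- same part
        have hp79 : p a = p y := hs78
        have h80 : ¬ A a y := hno a y hp79
        have hp81 : p b ≠ p y := Ne.symm (fun hh => (hp1) (((hp79).symm).symm.trans hh))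
        have hp82 : p c ≠ p y := Ne.symm (fun hh => (hp11) (((hp79).symm).symm.trans hh))
        have h83 : A b y := arcTotal harc (hp81).symm h77
        have h84 : A c y := arcTotal harc (hp82).symm h76
        exact (nbc1 y ne_b_y.symm ne_c_y.symm h83 h84)
      · -- different parts
        have hp85 : p a ≠ p y := hs78
        rcases (harc a y hp85).1 with ha86 | ha86
        · -- A a y
          have h87 : A a y := ha86
          have h88 : ¬ A b y := fun hh => nab1 y ne_a_y.symm ne_b_y.symm h87 hh
          have h89 : ¬ A c y := fun hh => nab2 y c ne_a_y.symm ne_b_y.symm ne_a_c.symm h87 h5 hh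
          have hp90 : p b = p y := sameOfNoArcs harc h88 h77
          have hp91 : p c = p y := sameOfNoArcs harc h89 h76
          have hp92 : p b ≠ p x := fun hh => ((hp3).symm) ((hp90).symm.trans hh)
          have hp93 : p c ≠ p x := fun hh => ((hp3).symm) ((hp91).symm.trans hh)
          exact ((hp2) (((hp90).symm).symm.trans (hp91).symm))
        · -- A y a
          exact (h75 (ha86))


lemma g4I_x
    (hno : ∀ u v : V, p u = p v → ¬ A u v)
    (harc : ∀ u v : V, p u ≠ p v → (A u v ∨ A v u) ∧ ¬ (A u v ∧ A v u))
    (a b c x y : V)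
    (ne_a_b : a ≠ b)
    (ne_a_c : a ≠ c)
    (ne_a_x : a ≠ x)
    (ne_a_y : a ≠ y)
    (ne_b_c : b ≠ c)
    (ne_b_x : b ≠ x)
    (ne_b_y : b ≠ y)
    (ne_c_x : c ≠ x)
    (ne_c_y : c ≠ y)
    (ne_x_y : x ≠ y)
    (nabp : p a ≠ p b)
    (nab1 : N1 A a b) (nab2 : N2 A a b) (nab2s : N2 A b a)
    (nbcp : p b ≠ p c)
    (nbc1 : N1 A b c) (nbc2 : N2 A b c) (nbc2s : N2 A c b)
    (nxyp : p x ≠ p y)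
    (nxy1 : N1 A x y) (nxy2 : N2 A x y) (nxy2s : N2 A y x)
    (ha1 : A a b)
    (ha2 : A b c)
    (ha3 : A x y)
    (ha4 : A a x)
    (ha5 : A c x)
    (hq6 : p a = p c)
    : False := by
  have hp1 : p a ≠ p b := nabp
  have hp2 : p b ≠ p c := nbcp
  have hp3 : p x ≠ p y := nxyp
  have h4 : A a b := ha1
  have h5 : A b c := ha2
  have h6 : A x y := ha3
  have h7 : A a x := ha4
  have h8 : A c x := ha5
  have hp9 : p a = p c := hq6
  have h10 : ¬ A b a := arcAsymm hno harc h4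
  have h11 : ¬ A x a := arcAsymm hno harc h7
  have hp12 : p a ≠ p x := arcNePart hno h7
  have h13 : ¬ A c b := arcAsymm hno harc h5
  have h14 : ¬ A x c := arcAsymm hno harc h8
  have hp15 : p c ≠ p x := arcNePart hno h8
  have h16 : ¬ A y x := arcAsymm hno harc h6
  have h17 : ¬ A a c := hno a c hp9
  have h18 : ¬ A c a := hno c a (hp9).symm
  have h19 : ¬ A b x := fun hh => nab1 x ne_a_x.symm ne_b_x.symm h7 hh
  exact (nab2 x c ne_a_x.symm ne_b_x.symm ne_a_c.symm h7 h5 h8)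


lemma g4I_y
    (hno : ∀ u v : V, p u = p v → ¬ A u v)
    (harc : ∀ u v : V, p u ≠ p v → (A u v ∨ A v u) ∧ ¬ (A u v ∧ A v u))
    (a b c x y : V)
    (ne_a_b : a ≠ b)
    (ne_a_c : a ≠ c)
    (ne_a_x : a ≠ x)
    (ne_a_y : a ≠ y)
    (ne_b_c : b ≠ c)
    (ne_b_x : b ≠ x)
    (ne_b_y : b ≠ y)
    (ne_c_x : c ≠ x)
    (ne_c_y : c ≠ y)
    (ne_x_y : x ≠ y)
    (nabp : p a ≠ p b)
    (nab1 : N1 A a b) (nab2 : N2 A a b) (nab2s : N2 A b a)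
    (nbcp : p b ≠ p c)
    (nbc1 : N1 A b c) (nbc2 : N2 A b c) (nbc2s : N2 A c b)
    (nxyp : p x ≠ p y)
    (nxy1 : N1 A x y) (nxy2 : N2 A x y) (nxy2s : N2 A y x)
    (ha1 : A a b)
    (ha2 : A b c)
    (ha3 : A x y)
    (ha4 : A a y)
    (ha5 : A c y)
    (hq6 : p a = p c)
    : False := by
  have hp1 : p a ≠ p b := nabp
  have hp2 : p b ≠ p c := nbcp
  have hp3 : p x ≠ p y := nxyp
  have h4 : A a b := ha1
  have h5 : A b c := ha2
  have h6 : A x y := ha3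
  have h7 : A a y := ha4
  have h8 : A c y := ha5
  have hp9 : p a = p c := hq6
  have h10 : ¬ A b a := arcAsymm hno harc h4
  have h11 : ¬ A y a := arcAsymm hno harc h7
  have hp12 : p a ≠ p y := arcNePart hno h7
  have h13 : ¬ A c b := arcAsymm hno harc h5
  have h14 : ¬ A y c := arcAsymm hno harc h8
  have hp15 : p c ≠ p y := arcNePart hno h8
  have h16 : ¬ A y x := arcAsymm hno harc h6
  have h17 : ¬ A a c := hno a c hp9
  have h18 : ¬ A c a := hno c a (hp9).symm
  have h19 : ¬ A b y := fun hh => nab1 y ne_a_y.symm ne_b_y.symm h7 hh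
  exact (nab2 y c ne_a_y.symm ne_b_y.symm ne_a_c.symm h7 h5 h8)


lemma g4I
    (hno : ∀ u v : V, p u = p v → ¬ A u v)
    (harc : ∀ u v : V, p u ≠ p v → (A u v ∨ A v u) ∧ ¬ (A u v ∧ A v u))
    (a b c x y w : V)
    (ne_a_b : a ≠ b)
    (ne_a_c : a ≠ c)
    (ne_a_x : a ≠ x)
    (ne_a_y : a ≠ y)
    (ne_a_w : a ≠ w)
    (ne_b_c : b ≠ c)
    (ne_b_x : b ≠ x)
    (ne_b_y : b ≠ y)
    (ne_b_w : b ≠ w)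
    (ne_c_x : c ≠ x)
    (ne_c_y : c ≠ y)
    (ne_c_w : c ≠ w)
    (ne_x_y : x ≠ y)
    (ne_x_w : x ≠ w)
    (ne_y_w : y ≠ w)
    (nabp : p a ≠ p b)
    (nab1 : N1 A a b) (nab2 : N2 A a b) (nab2s : N2 A b a)
    (nbcp : p b ≠ p c)
    (nbc1 : N1 A b c) (nbc2 : N2 A b c) (nbc2s : N2 A c b)
    (nxyp : p x ≠ p y)
    (nxy1 : N1 A x y) (nxy2 : N2 A x y) (nxy2s : N2 A y x)
    (ha1 : A a b)
    (ha2 : A b c)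
    (ha3 : A x y)
    (ha4 : A a w)
    (ha5 : A c w)
    (hq6 : p a = p c)
    : False := by
  have hp1 : p a ≠ p b := nabp
  have hp2 : p b ≠ p c := nbcp
  have hp3 : p x ≠ p y := nxyp
  have h4 : A a b := ha1
  have h5 : A b c := ha2
  have h6 : A x y := ha3
  have h7 : A a w := ha4
  have h8 : A c w := ha5
  have hp9 : p a = p c := hq6
  have h10 : ¬ A b a := arcAsymm hno harc h4
  have h11 : ¬ A w a := arcAsymm hno harc h7
  have hp12 : p a ≠ p w := arcNePart hno h7
  have h13 : ¬ A c b := arcAsymm hno harc h5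
  have h14 : ¬ A w c := arcAsymm hno harc h8
  have hp15 : p c ≠ p w := arcNePart hno h8
  have h16 : ¬ A y x := arcAsymm hno harc h6
  have h17 : ¬ A a c := hno a c hp9
  have h18 : ¬ A c a := hno c a (hp9).symm
  have h19 : ¬ A b w := fun hh => nab1 w ne_a_w.symm ne_b_w.symm h7 hh
  exact (nab2 w c ne_a_w.symm ne_b_w.symm ne_a_c.symm h7 h5 h8)


lemma g4II_wb_zx
    (hno : ∀ u v : V, p u = p v → ¬ A u v)
    (harc : ∀ u v : V, p u ≠ p v → (A u v ∨ A v u) ∧ ¬ (A u v ∧ A v u))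
    (a b c x y : V)
    (ne_a_b : a ≠ b)
    (ne_a_c : a ≠ c)
    (ne_a_x : a ≠ x)
    (ne_a_y : a ≠ y)
    (ne_b_c : b ≠ c)
    (ne_b_x : b ≠ x)
    (ne_b_y : b ≠ y)
    (ne_c_x : c ≠ x)
    (ne_c_y : c ≠ y)
    (ne_x_y : x ≠ y)
    (nabp : p a ≠ p b)
    (nab1 : N1 A a b) (nab2 : N2 A a b) (nab2s : N2 A b a)
    (nbcp : p b ≠ p c)
    (nbc1 : N1 A b c) (nbc2 : N2 A b c) (nbc2s : N2 A c b)
    (nxyp : p x ≠ p y)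
    (nxy1 : N1 A x y) (nxy2 : N2 A x y) (nxy2s : N2 A y x)
    (ha1 : A a b)
    (ha2 : A b c)
    (ha3 : A x y)
    (ha4 : A c x)
    (ha5 : A x b)
    (hq6 : p a = p c)
    : False := by
  have hp1 : p a ≠ p b := nabp
  have hp2 : p b ≠ p c := nbcp
  have hp3 : p x ≠ p y := nxyp
  have h4 : A a b := ha1
  have h5 : A b c := ha2
  have h6 : A x y := ha3
  have h7 : A c x := ha4
  have h8 : A x b := ha5
  have hp9 : p a = p c := hq6
  have h10 : ¬ A b a := arcAsymm hno harc h4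
  have h11 : ¬ A c b := arcAsymm hno harc h5
  have h12 : ¬ A x c := arcAsymm hno harc h7
  have hp13 : p c ≠ p x := arcNePart hno h7
  have h14 : ¬ A b x := arcAsymm hno harc h8
  have hp15 : p b ≠ p x := Ne.symm (arcNePart hno h8)
  have h16 : ¬ A y x := arcAsymm hno harc h6
  have h17 : ¬ A a c := hno a c hp9
  have h18 : ¬ A c a := hno c a (hp9).symm
  have hp19 : p a ≠ p x := fun hh => (hp13) ((hp9).symm.trans hh)
  have h20 : ¬ A a x := fun hh => nab2 x c ne_a_x.symm ne_b_x.symm ne_a_c.symm hh h5 h7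
  have h21 : ¬ A b y := fun hh => nbc2 y x ne_b_y.symm ne_c_y.symm ne_b_x.symm hh h7 h6
  have h22 : ¬ A y b := fun hh => nxy1 b ne_b_x ne_b_y h8 hh
  have h23 : ¬ A y a := fun hh => nxy2 b a ne_b_x ne_b_y ne_a_x h8 hh h4
  have h24 : ¬ A y c := fun hh => nxy2s c b ne_c_y ne_c_x ne_b_y hh h8 h5
  have h25 : A x a := arcTotal harc hp19 h20
  have hp26 : p b = p y := sameOfNoArcs harc h21 h22
  have hp27 : p a ≠ p y := Ne.symm (fun hh => ((hp1).symm) (((hp26).symm).symm.trans hh))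
  have hp28 : p c ≠ p y := Ne.symm (fun hh => (hp2) (((hp26).symm).symm.trans hh))
  have h29 : A a y := arcTotal harc (hp27).symm h23
  have h30 : A c y := arcTotal harc (hp28).symm h24
  exact (nab2 y c ne_a_y.symm ne_b_y.symm ne_a_c.symm h29 h5 h30)


lemma g4II_wb_zy
    (hno : ∀ u v : V, p u = p v → ¬ A u v)
    (harc : ∀ u v : V, p u ≠ p v → (A u v ∨ A v u) ∧ ¬ (A u v ∧ A v u))
    (a b c x y : V)
    (ne_a_b : a ≠ b)
    (ne_a_c : a ≠ c)
    (ne_a_x : a ≠ x)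
    (ne_a_y : a ≠ y)
    (ne_b_c : b ≠ c)
    (ne_b_x : b ≠ x)
    (ne_b_y : b ≠ y)
    (ne_c_x : c ≠ x)
    (ne_c_y : c ≠ y)
    (ne_x_y : x ≠ y)
    (nabp : p a ≠ p b)
    (nab1 : N1 A a b) (nab2 : N2 A a b) (nab2s : N2 A b a)
    (nbcp : p b ≠ p c)
    (nbc1 : N1 A b c) (nbc2 : N2 A b c) (nbc2s : N2 A c b)
    (nxyp : p x ≠ p y)
    (nxy1 : N1 A x y) (nxy2 : N2 A x y) (nxy2s : N2 A y x)
    (ha1 : A a b)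
    (ha2 : A b c)
    (ha3 : A x y)
    (ha4 : A c y)
    (ha5 : A y b)
    (hq6 : p a = p c)
    : False := by
  have hp1 : p a ≠ p b := nabp
  have hp2 : p b ≠ p c := nbcp
  have hp3 : p x ≠ p y := nxyp
  have h4 : A a b := ha1
  have h5 : A b c := ha2
  have h6 : A x y := ha3
  have h7 : A c y := ha4
  have h8 : A y b := ha5
  have hp9 : p a = p c := hq6
  have h10 : ¬ A b a := arcAsymm hno harc h4
  have h11 : ¬ A c b := arcAsymm hno harc h5
  have h12 : ¬ A y c := arcAsymm hno harc h7
  have hp13 : p c ≠ p y := arcNePart hno h7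
  have h14 : ¬ A y x := arcAsymm hno harc h6
  have h15 : ¬ A b y := arcAsymm hno harc h8
  have hp16 : p b ≠ p y := Ne.symm (arcNePart hno h8)
  have h17 : ¬ A a c := hno a c hp9
  have h18 : ¬ A c a := hno c a (hp9).symm
  have hp19 : p a ≠ p y := fun hh => (hp13) ((hp9).symm.trans hh)
  have h20 : ¬ A a y := fun hh => nab2 y c ne_a_y.symm ne_b_y.symm ne_a_c.symm hh h5 h7
  have h21 : ¬ A b x := fun hh => nbc2s y x ne_c_y.symm ne_b_y.symm ne_c_x.symm h7 hh h6
  have h22 : ¬ A x b := fun hh => nxy1 b ne_b_x ne_b_y hh h8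
  have h23 : ¬ A x c := fun hh => nxy2 c b ne_c_x ne_c_y ne_b_x hh h8 h5
  have h24 : ¬ A x a := fun hh => nxy2s b a ne_b_y ne_b_x ne_a_y h8 hh h4
  have h25 : A y a := arcTotal harc hp19 h20
  have hp26 : p b = p x := sameOfNoArcs harc h21 h22
  have hp27 : p a ≠ p x := Ne.symm (fun hh => ((hp1).symm) (((hp26).symm).symm.trans hh))
  have hp28 : p c ≠ p x := Ne.symm (fun hh => (hp2) (((hp26).symm).symm.trans hh))
  have h29 : A a x := arcTotal harc (hp27).symm h24
  have h30 : A c x := arcTotal harc (hp28).symm h23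
  exact (nab2 x c ne_a_x.symm ne_b_x.symm ne_a_c.symm h29 h5 h30)


lemma g4II_wb
    (hno : ∀ u v : V, p u = p v → ¬ A u v)
    (harc : ∀ u v : V, p u ≠ p v → (A u v ∨ A v u) ∧ ¬ (A u v ∧ A v u))
    (a b c x y z : V)
    (ne_a_b : a ≠ b)
    (ne_a_c : a ≠ c)
    (ne_a_x : a ≠ x)
    (ne_a_y : a ≠ y)
    (ne_a_z : a ≠ z)
    (ne_b_c : b ≠ c)
    (ne_b_x : b ≠ x)
    (ne_b_y : b ≠ y)
    (ne_b_z : b ≠ z)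
    (ne_c_x : c ≠ x)
    (ne_c_y : c ≠ y)
    (ne_c_z : c ≠ z)
    (ne_x_y : x ≠ y)
    (ne_x_z : x ≠ z)
    (ne_y_z : y ≠ z)
    (nabp : p a ≠ p b)
    (nab1 : N1 A a b) (nab2 : N2 A a b) (nab2s : N2 A b a)
    (nbcp : p b ≠ p c)
    (nbc1 : N1 A b c) (nbc2 : N2 A b c) (nbc2s : N2 A c b)
    (nxyp : p x ≠ p y)
    (nxy1 : N1 A x y) (nxy2 : N2 A x y) (nxy2s : N2 A y x)
    (ha1 : A a b)
    (ha2 : A b c)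
    (ha3 : A x y)
    (ha4 : A c z)
    (ha5 : A z b)
    (hq6 : p a = p c)
    : False := by
  have hp1 : p a ≠ p b := nabp
  have hp2 : p b ≠ p c := nbcp
  have hp3 : p x ≠ p y := nxyp
  have h4 : A a b := ha1
  have h5 : A b c := ha2
  have h6 : A x y := ha3
  have h7 : A c z := ha4
  have h8 : A z b := ha5
  have hp9 : p a = p c := hq6
  have h10 : ¬ A b a := arcAsymm hno harc h4
  have h11 : ¬ A c b := arcAsymm hno harc h5
  have h12 : ¬ A z c := arcAsymm hno harc h7
  have hp13 : p c ≠ p z := arcNePart hno h7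
  have h14 : ¬ A y x := arcAsymm hno harc h6
  have h15 : ¬ A b z := arcAsymm hno harc h8
  have hp16 : p b ≠ p z := Ne.symm (arcNePart hno h8)
  have h17 : ¬ A a c := hno a c hp9
  have h18 : ¬ A c a := hno c a (hp9).symm
  have hp19 : p a ≠ p z := fun hh => (hp13) ((hp9).symm.trans hh)
  have h20 : ¬ A a z := fun hh => nab2 z c ne_a_z.symm ne_b_z.symm ne_a_c.symm hh h5 h7
  have h21 : A z a := arcTotal harc hp19 h20
  by_cases hs22 : p a = p x
  · -- same part
    have hp23 : p a = p x := hs22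
    have h24 : ¬ A a x := hno a x hp23
    have h25 : ¬ A x a := hno x a (hp23).symm
    have hp26 : p a ≠ p y := fun hh => (hp3) ((hp23).symm.trans hh)
    have hp27 : p c = p x := ((hp9).symm).trans hp23
    have hp28 : p c ≠ p y := fun hh => (hp26) (((hp9).symm).symm.trans hh)
    have hp29 : p b ≠ p x := Ne.symm (fun hh => (hp1) (((hp23).symm).symm.trans hh))
    have hp30 : p x ≠ p z := fun hh => (hp19) (((hp23).symm).symm.trans hh)
    have h31 : ¬ A c x := hno c x hp27
    have h32 : ¬ A x c := hno x c (hp27).symm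
    by_cases hs33 : p b = p y
    · -- same part
      have hp34 : p b = p y := hs33
      have h35 : ¬ A b y := hno b y hp34
      have h36 : ¬ A y b := hno y b (hp34).symm
      have hp37 : p y ≠ p z := fun hh => (hp16) (((hp34).symm).symm.trans hh)
      rcases (harc a y hp26).1 with ha38 | ha38
      · -- A a y
        have h39 : A a y := ha38
        have h40 : ¬ A y a := arcAsymm hno harc h39
        have h41 : ¬ A c y := fun hh => nab2 y c ne_a_y.symm ne_b_y.symm ne_a_c.symm h39 h5 hh
        have h42 : ¬ A b x := fun hh => nab2 y x ne_a_y.symm ne_b_y.symm ne_a_x.symm h39 hh h6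
        have h43 : ¬ A y c := fun hh => nab2s c y ne_b_c.symm ne_a_c.symm ne_b_y.symm h5 h39 hh
        have h44 : A x b := arcTotal harc hp29 h42
        exact (hp28 (sameOfNoArcs harc h41 h43))
      · -- A y a
        have h45 : A y a := ha38
        have h46 : ¬ A a y := arcAsymm hno harc h45
        have h47 : ¬ A x b := fun hh => nxy2 b a ne_b_x ne_b_y ne_a_x hh h45 h4
        have h48 : ¬ A x z := fun hh => nxy2s a z ne_a_y ne_a_x ne_y_z.symm h45 hh h21
        have h49 : A b x := arcTotal harc (hp29).symm h47
        have h50 : A z x := arcTotal harc hp30 h48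
        exact (nbc2 x z ne_b_x.symm ne_c_x.symm ne_b_z.symm h49 h7 h50)
    · -- different parts
      have hp51 : p b ≠ p y := hs33
      rcases (harc b y hp51).1 with ha52 | ha52
      · -- A b y
        have h53 : A b y := ha52
        have h54 : ¬ A y b := arcAsymm hno harc h53
        have h55 : ¬ A a y := fun hh => nab1 y ne_a_y.symm ne_b_y.symm hh h53
        have h56 : ¬ A c y := fun hh => nbc1 y ne_b_y.symm ne_c_y.symm h53 hh
        have h57 : ¬ A z y := fun hh => nbc2 y z ne_b_y.symm ne_c_y.symm ne_b_z.symm h53 h7 hh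
        have h58 : ¬ A y z := fun hh => nbc2s z y ne_c_z.symm ne_b_z.symm ne_c_y.symm h7 h53 hh
        have h59 : A y a := arcTotal harc hp26 h55
        have h60 : A y c := arcTotal harc hp28 h56
        have hp61 : p y = p z := sameOfNoArcs harc h58 h57
        have h62 : ¬ A x b := fun hh => nxy2 b a ne_b_x ne_b_y ne_a_x hh h59 h4
        have h63 : ¬ A x z := fun hh => nxy2 z c ne_x_z.symm ne_y_z.symm ne_c_x hh h60 h7
        have h64 : A b x := arcTotal harc (hp29).symm h62
        have h65 : A z x := arcTotal harc hp30 h63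
        exact (nbc2 x z ne_b_x.symm ne_c_x.symm ne_b_z.symm h64 h7 h65)
      · -- A y b
        have h66 : A y b := ha52
        have h67 : ¬ A b y := arcAsymm hno harc h66
        have h68 : ¬ A x b := fun hh => nxy1 b ne_b_x ne_b_y hh h66
        have h69 : ¬ A x z := fun hh => nxy2s b z ne_b_y ne_b_x ne_y_z.symm h66 hh h8
        have h70 : A b x := arcTotal harc (hp29).symm h68
        have h71 : A z x := arcTotal harc hp30 h69
        have h72 : ¬ A a y := fun hh => nab2 y x ne_a_y.symm ne_b_y.symm ne_a_x.symm hh h70 h6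
        exact (nbc2 x z ne_b_x.symm ne_c_x.symm ne_b_z.symm h70 h7 h71)
  · -- different parts
    have hp73 : p a ≠ p x := hs22
    rcases (harc a x hp73).1 with ha74 | ha74
    · -- A a x
      have h75 : A a x := ha74
      have h76 : ¬ A x a := arcAsymm hno harc h75
      have hp77 : p c ≠ p x := fun hh => (hp73) (((hp9).symm).symm.trans hh)
      have h78 : ¬ A b x := fun hh => nab1 x ne_a_x.symm ne_b_x.symm h75 hh
      have h79 : ¬ A c x := fun hh => nab2 x c ne_a_x.symm ne_b_x.symm ne_a_c.symm h75 h5 hh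
      have h80 : ¬ A x c := fun hh => nab2s c x ne_b_c.symm ne_a_c.symm ne_b_x.symm h5 h75 hh
      have h81 : ¬ A b y := fun hh => nab2s y x ne_b_y.symm ne_a_y.symm ne_b_x.symm hh h75 h6
      exact (hp77 (sameOfNoArcs harc h79 h80))
    · -- A x a
      have h82 : A x a := ha74
      have h83 : ¬ A a x := arcAsymm hno harc h82
      have hp84 : p c ≠ p x := fun hh => (hp73) (((hp9).symm).symm.trans hh)
      have h85 : ¬ A y a := fun hh => nxy1 a ne_a_x ne_a_y h82 hh
      have h86 : ¬ A y z := fun hh => nxy2 a z ne_a_x ne_a_y ne_x_z.symm h82 hh h21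
      have h87 : ¬ A y b := fun hh => nxy2s b a ne_b_y ne_b_x ne_a_y hh h82 h4
      by_cases hs88 : p a = p y
      · -- same part
        have hp89 : p a = p y := hs88
        have h90 : ¬ A a y := hno a y hp89
        have hp91 : p c = p y := ((hp9).symm).trans hp89
        have hp92 : p b ≠ p y := Ne.symm (fun hh => (hp1) (((hp89).symm).symm.trans hh))
        have hp93 : p y ≠ p z := fun hh => (hp19) (((hp89).symm).symm.trans hh)
        have h94 : A b y := arcTotal harc (hp92).symm h87
        have h95 : ¬ A c y := hno c y hp91
        have h96 : ¬ A y c := hno y c (hp91).symm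
        have h97 : A z y := arcTotal harc hp93 h86
        have h98 : ¬ A c x := fun hh => nbc2 y x ne_b_y.symm ne_c_y.symm ne_b_x.symm h94 hh h6
        exact (nbc2 y z ne_b_y.symm ne_c_y.symm ne_b_z.symm h94 h7 h97)
      · -- different parts
        have hp99 : p a ≠ p y := hs88
        rcases (harc a y hp99).1 with ha100 | ha100
        · -- A a y
          have h101 : A a y := ha100
          have hp102 : p c ≠ p y := fun hh => (hp99) (((hp9).symm).symm.trans hh)
          have h103 : ¬ A b y := fun hh => nab1 y ne_a_y.symm ne_b_y.symm h101 hh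
          have h104 : ¬ A c y := fun hh => nab2 y c ne_a_y.symm ne_b_y.symm ne_a_c.symm h101 h5 hh
          have h105 : ¬ A b x := fun hh => nab2 y x ne_a_y.symm ne_b_y.symm ne_a_x.symm h101 hh h6
          have h106 : ¬ A y c := fun hh => nab2s c y ne_b_c.symm ne_a_c.symm ne_b_y.symm h5 h101 hh
          have hp107 : p b = p y := sameOfNoArcs harc h103 h87
          exact (hp102 (sameOfNoArcs harc h104 h106))
        · -- A y a
          exact (h85 (ha100))


lemma g4II_wx
    (hno : ∀ u v : V, p u = p v → ¬ A u v)
    (harc : ∀ u v : V, p u ≠ p v → (A u v ∨ A v u) ∧ ¬ (A u v ∧ A v u))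
    (a b c x y z : V)
    (ne_a_b : a ≠ b)
    (ne_a_c : a ≠ c)
    (ne_a_x : a ≠ x)
    (ne_a_y : a ≠ y)
    (ne_a_z : a ≠ z)
    (ne_b_c : b ≠ c)
    (ne_b_x : b ≠ x)
    (ne_b_y : b ≠ y)
    (ne_b_z : b ≠ z)
    (ne_c_x : c ≠ x)
    (ne_c_y : c ≠ y)
    (ne_c_z : c ≠ z)
    (ne_x_y : x ≠ y)
    (ne_x_z : x ≠ z)
    (ne_y_z : y ≠ z)
    (nabp : p a ≠ p b)
    (nab1 : N1 A a b) (nab2 : N2 A a b) (nab2s : N2 A b a)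
    (nbcp : p b ≠ p c)
    (nbc1 : N1 A b c) (nbc2 : N2 A b c) (nbc2s : N2 A c b)
    (nxyp : p x ≠ p y)
    (nxy1 : N1 A x y) (nxy2 : N2 A x y) (nxy2s : N2 A y x)
    (ha1 : A a b)
    (ha2 : A b c)
    (ha3 : A x y)
    (ha4 : A a x)
    (ha5 : A c z)
    (ha6 : A z x)
    (hq7 : p a = p c)
    : False := by
  have hp1 : p a ≠ p b := nabp
  have hp2 : p b ≠ p c := nbcp
  have hp3 : p x ≠ p y := nxyp
  have h4 : A a b := ha1
  have h5 : A b c := ha2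
  have h6 : A x y := ha3
  have h7 : A a x := ha4
  have h8 : A c z := ha5
  have h9 : A z x := ha6
  have hp10 : p a = p c := hq7
  have h11 : ¬ A b a := arcAsymm hno harc h4
  have h12 : ¬ A x a := arcAsymm hno harc h7
  have hp13 : p a ≠ p x := arcNePart hno h7
  have h14 : ¬ A c b := arcAsymm hno harc h5
  have h15 : ¬ A z c := arcAsymm hno harc h8
  have hp16 : p c ≠ p z := arcNePart hno h8
  have h17 : ¬ A y x := arcAsymm hno harc h6
  have h18 : ¬ A x z := arcAsymm hno harc h9
  have hp19 : p x ≠ p z := Ne.symm (arcNePart hno h9)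
  have h20 : ¬ A a c := hno a c hp10
  have h21 : ¬ A c a := hno c a (hp10).symm
  have hp22 : p a ≠ p z := fun hh => (hp16) ((hp10).symm.trans hh)
  have hp23 : p c ≠ p x := fun hh => (hp13) (((hp10).symm).symm.trans hh)
  have h24 : ¬ A b x := fun hh => nab1 x ne_a_x.symm ne_b_x.symm h7 hh
  have h25 : ¬ A c x := fun hh => nab2 x c ne_a_x.symm ne_b_x.symm ne_a_c.symm h7 h5 hh
  have h26 : ¬ A b z := fun hh => nab2 x z ne_a_x.symm ne_b_x.symm ne_a_z.symm h7 hh h9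
  have h27 : ¬ A a z := fun hh => nab2 z c ne_a_z.symm ne_b_z.symm ne_a_c.symm hh h5 h8
  have h28 : ¬ A x c := fun hh => nab2s c x ne_b_c.symm ne_a_c.symm ne_b_x.symm h5 h7 hh
  have h29 : ¬ A b y := fun hh => nab2s y x ne_b_y.symm ne_a_y.symm ne_b_x.symm hh h7 h6
  have h30 : A z a := arcTotal harc hp22 h27
  exact (hp23 (sameOfNoArcs harc h25 h28))


lemma g4II_wy_zx
    (hno : ∀ u v : V, p u = p v → ¬ A u v)
    (harc : ∀ u v : V, p u ≠ p v → (A u v ∨ A v u) ∧ ¬ (A u v ∧ A v u))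
    (a b c x y : V)
    (ne_a_b : a ≠ b)
    (ne_a_c : a ≠ c)
    (ne_a_x : a ≠ x)
    (ne_a_y : a ≠ y)
    (ne_b_c : b ≠ c)
    (ne_b_x : b ≠ x)
    (ne_b_y : b ≠ y)
    (ne_c_x : c ≠ x)
    (ne_c_y : c ≠ y)
    (ne_x_y : x ≠ y)
    (nabp : p a ≠ p b)
    (nab1 : N1 A a b) (nab2 : N2 A a b) (nab2s : N2 A b a)
    (nbcp : p b ≠ p c)
    (nbc1 : N1 A b c) (nbc2 : N2 A b c) (nbc2s : N2 A c b)
    (nxyp : p x ≠ p y)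
    (nxy1 : N1 A x y) (nxy2 : N2 A x y) (nxy2s : N2 A y x)
    (ha1 : A a b)
    (ha2 : A b c)
    (ha3 : A x y)
    (ha4 : A a y)
    (ha5 : A c x)
    (hq6 : p a = p c)
    : False := by
  have hp1 : p a ≠ p b := nabp
  have hp2 : p b ≠ p c := nbcp
  have hp3 : p x ≠ p y := nxyp
  have h4 : A a b := ha1
  have h5 : A b c := ha2
  have h6 : A x y := ha3
  have h7 : A a y := ha4
  have h8 : A c x := ha5
  have hp9 : p a = p c := hq6
  have h10 : ¬ A b a := arcAsymm hno harc h4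
  have h11 : ¬ A y a := arcAsymm hno harc h7
  have hp12 : p a ≠ p y := arcNePart hno h7
  have h13 : ¬ A c b := arcAsymm hno harc h5
  have h14 : ¬ A x c := arcAsymm hno harc h8
  have hp15 : p c ≠ p x := arcNePart hno h8
  have h16 : ¬ A y x := arcAsymm hno harc h6
  have h17 : ¬ A a c := hno a c hp9
  have h18 : ¬ A c a := hno c a (hp9).symm
  have hp19 : p a ≠ p x := fun hh => (hp15) ((hp9).symm.trans hh)
  have hp20 : p c ≠ p y := fun hh => (hp12) (((hp9).symm).symm.trans hh)
  have h21 : ¬ A b y := fun hh => nab1 y ne_a_y.symm ne_b_y.symm h7 hh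
  have h22 : ¬ A a x := fun hh => nab2 x c ne_a_x.symm ne_b_x.symm ne_a_c.symm hh h5 h8
  have h23 : ¬ A c y := fun hh => nab2 y c ne_a_y.symm ne_b_y.symm ne_a_c.symm h7 h5 hh
  have h24 : ¬ A b x := fun hh => nab2 y x ne_a_y.symm ne_b_y.symm ne_a_x.symm h7 hh h6
  have h25 : ¬ A y c := fun hh => nab2s c y ne_b_c.symm ne_a_c.symm ne_b_y.symm h5 h7 hh
  have h26 : A x a := arcTotal harc hp19 h22
  exact (hp20 (sameOfNoArcs harc h23 h25))


lemma g4II_wy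
    (hno : ∀ u v : V, p u = p v → ¬ A u v)
    (harc : ∀ u v : V, p u ≠ p v → (A u v ∨ A v u) ∧ ¬ (A u v ∧ A v u))
    (a b c x y z : V)
    (ne_a_b : a ≠ b)
    (ne_a_c : a ≠ c)
    (ne_a_x : a ≠ x)
    (ne_a_y : a ≠ y)
    (ne_a_z : a ≠ z)
    (ne_b_c : b ≠ c)
    (ne_b_x : b ≠ x)
    (ne_b_y : b ≠ y)
    (ne_b_z : b ≠ z)
    (ne_c_x : c ≠ x)
    (ne_c_y : c ≠ y)
    (ne_c_z : c ≠ z)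
    (ne_x_y : x ≠ y)
    (ne_x_z : x ≠ z)
    (ne_y_z : y ≠ z)
    (nabp : p a ≠ p b)
    (nab1 : N1 A a b) (nab2 : N2 A a b) (nab2s : N2 A b a)
    (nbcp : p b ≠ p c)
    (nbc1 : N1 A b c) (nbc2 : N2 A b c) (nbc2s : N2 A c b)
    (nxyp : p x ≠ p y)
    (nxy1 : N1 A x y) (nxy2 : N2 A x y) (nxy2s : N2 A y x)
    (ha1 : A a b)
    (ha2 : A b c)
    (ha3 : A x y)
    (ha4 : A a y)
    (ha5 : A c z)
    (ha6 : A z y)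
    (hq7 : p a = p c)
    : False := by
  have hp1 : p a ≠ p b := nabp
  have hp2 : p b ≠ p c := nbcp
  have hp3 : p x ≠ p y := nxyp
  have h4 : A a b := ha1
  have h5 : A b c := ha2
  have h6 : A x y := ha3
  have h7 : A a y := ha4
  have h8 : A c z := ha5
  have h9 : A z y := ha6
  have hp10 : p a = p c := hq7
  have h11 : ¬ A b a := arcAsymm hno harc h4
  have h12 : ¬ A y a := arcAsymm hno harc h7
  have hp13 : p a ≠ p y := arcNePart hno h7
  have h14 : ¬ A c b := arcAsymm hno harc h5
  have h15 : ¬ A z c := arcAsymm hno harc h8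
  have hp16 : p c ≠ p z := arcNePart hno h8
  have h17 : ¬ A y x := arcAsymm hno harc h6
  have h18 : ¬ A y z := arcAsymm hno harc h9
  have hp19 : p y ≠ p z := Ne.symm (arcNePart hno h9)
  have h20 : ¬ A a c := hno a c hp10
  have h21 : ¬ A c a := hno c a (hp10).symm
  have hp22 : p a ≠ p z := fun hh => (hp16) ((hp10).symm.trans hh)
  have hp23 : p c ≠ p y := fun hh => (hp13) (((hp10).symm).symm.trans hh)
  have h24 : ¬ A b y := fun hh => nab1 y ne_a_y.symm ne_b_y.symm h7 hh
  have h25 : ¬ A c y := fun hh => nab2 y c ne_a_y.symm ne_b_y.symm ne_a_c.symm h7 h5 hh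
  have h26 : ¬ A b x := fun hh => nab2 y x ne_a_y.symm ne_b_y.symm ne_a_x.symm h7 hh h6
  have h27 : ¬ A b z := fun hh => nab2 y z ne_a_y.symm ne_b_y.symm ne_a_z.symm h7 hh h9
  have h28 : ¬ A a z := fun hh => nab2 z c ne_a_z.symm ne_b_z.symm ne_a_c.symm hh h5 h8
  have h29 : ¬ A y c := fun hh => nab2s c y ne_b_c.symm ne_a_c.symm ne_b_y.symm h5 h7 hh
  have h30 : A z a := arcTotal harc hp22 h28
  exact (hp23 (sameOfNoArcs harc h25 h29))


lemma g4II_zx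
    (hno : ∀ u v : V, p u = p v → ¬ A u v)
    (harc : ∀ u v : V, p u ≠ p v → (A u v ∨ A v u) ∧ ¬ (A u v ∧ A v u))
    (a b c x y w : V)
    (ne_a_b : a ≠ b)
    (ne_a_c : a ≠ c)
    (ne_a_x : a ≠ x)
    (ne_a_y : a ≠ y)
    (ne_a_w : a ≠ w)
    (ne_b_c : b ≠ c)
    (ne_b_x : b ≠ x)
    (ne_b_y : b ≠ y)
    (ne_b_w : b ≠ w)
    (ne_c_x : c ≠ x)
    (ne_c_y : c ≠ y)
    (ne_c_w : c ≠ w)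
    (ne_x_y : x ≠ y)
    (ne_x_w : x ≠ w)
    (ne_y_w : y ≠ w)
    (nabp : p a ≠ p b)
    (nab1 : N1 A a b) (nab2 : N2 A a b) (nab2s : N2 A b a)
    (nbcp : p b ≠ p c)
    (nbc1 : N1 A b c) (nbc2 : N2 A b c) (nbc2s : N2 A c b)
    (nxyp : p x ≠ p y)
    (nxy1 : N1 A x y) (nxy2 : N2 A x y) (nxy2s : N2 A y x)
    (ha1 : A a b)
    (ha2 : A b c)
    (ha3 : A x y)
    (ha4 : A a w)
    (ha5 : A c x)
    (ha6 : A x w)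
    (hq7 : p a = p c)
    : False := by
  have hp1 : p a ≠ p b := nabp
  have hp2 : p b ≠ p c := nbcp
  have hp3 : p x ≠ p y := nxyp
  have h4 : A a b := ha1
  have h5 : A b c := ha2
  have h6 : A x y := ha3
  have h7 : A a w := ha4
  have h8 : A c x := ha5
  have h9 : A x w := ha6
  have hp10 : p a = p c := hq7
  have h11 : ¬ A b a := arcAsymm hno harc h4
  have h12 : ¬ A w a := arcAsymm hno harc h7
  have hp13 : p a ≠ p w := arcNePart hno h7
  have h14 : ¬ A c b := arcAsymm hno harc h5
  have h15 : ¬ A x c := arcAsymm hno harc h8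
  have hp16 : p c ≠ p x := arcNePart hno h8
  have h17 : ¬ A y x := arcAsymm hno harc h6
  have h18 : ¬ A w x := arcAsymm hno harc h9
  have hp19 : p x ≠ p w := arcNePart hno h9
  have h20 : ¬ A a c := hno a c hp10
  have h21 : ¬ A c a := hno c a (hp10).symm
  have hp22 : p a ≠ p x := fun hh => (hp16) ((hp10).symm.trans hh)
  have hp23 : p c ≠ p w := fun hh => (hp13) (((hp10).symm).symm.trans hh)
  have h24 : ¬ A b w := fun hh => nab1 w ne_a_w.symm ne_b_w.symm h7 hh
  have h25 : ¬ A a x := fun hh => nab2 x c ne_a_x.symm ne_b_x.symm ne_a_c.symm hh h5 h8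
  have h26 : ¬ A c w := fun hh => nab2 w c ne_a_w.symm ne_b_w.symm ne_a_c.symm h7 h5 hh
  have h27 : ¬ A b x := fun hh => nab2 w x ne_a_w.symm ne_b_w.symm ne_a_x.symm h7 hh h9
  have h28 : ¬ A w c := fun hh => nab2s c w ne_b_c.symm ne_a_c.symm ne_b_w.symm h5 h7 hh
  have h29 : ¬ A b y := fun hh => nbc2 y x ne_b_y.symm ne_c_y.symm ne_b_x.symm hh h8 h6
  have h30 : ¬ A y w := fun hh => nxy1 w ne_x_w.symm ne_y_w.symm h9 hh
  have h31 : ¬ A y a := fun hh => nxy2 w a ne_x_w.symm ne_y_w.symm ne_a_x h9 hh h7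
  have h32 : A x a := arcTotal harc hp22 h25
  exact (hp23 (sameOfNoArcs harc h26 h28))


lemma g4II_zy
    (hno : ∀ u v : V, p u = p v → ¬ A u v)
    (harc : ∀ u v : V, p u ≠ p v → (A u v ∨ A v u) ∧ ¬ (A u v ∧ A v u))
    (a b c x y w : V)
    (ne_a_b : a ≠ b)
    (ne_a_c : a ≠ c)
    (ne_a_x : a ≠ x)
    (ne_a_y : a ≠ y)
    (ne_a_w : a ≠ w)
    (ne_b_c : b ≠ c)
    (ne_b_x : b ≠ x)
    (ne_b_y : b ≠ y)
    (ne_b_w : b ≠ w)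
    (ne_c_x : c ≠ x)
    (ne_c_y : c ≠ y)
    (ne_c_w : c ≠ w)
    (ne_x_y : x ≠ y)
    (ne_x_w : x ≠ w)
    (ne_y_w : y ≠ w)
    (nabp : p a ≠ p b)
    (nab1 : N1 A a b) (nab2 : N2 A a b) (nab2s : N2 A b a)
    (nbcp : p b ≠ p c)
    (nbc1 : N1 A b c) (nbc2 : N2 A b c) (nbc2s : N2 A c b)
    (nxyp : p x ≠ p y)
    (nxy1 : N1 A x y) (nxy2 : N2 A x y) (nxy2s : N2 A y x)
    (ha1 : A a b)
    (ha2 : A b c)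
    (ha3 : A x y)
    (ha4 : A a w)
    (ha5 : A c y)
    (ha6 : A y w)
    (hq7 : p a = p c)
    : False := by
  have hp1 : p a ≠ p b := nabp
  have hp2 : p b ≠ p c := nbcp
  have hp3 : p x ≠ p y := nxyp
  have h4 : A a b := ha1
  have h5 : A b c := ha2
  have h6 : A x y := ha3
  have h7 : A a w := ha4
  have h8 : A c y := ha5
  have h9 : A y w := ha6
  have hp10 : p a = p c := hq7
  have h11 : ¬ A b a := arcAsymm hno harc h4
  have h12 : ¬ A w a := arcAsymm hno harc h7
  have hp13 : p a ≠ p w := arcNePart hno h7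
  have h14 : ¬ A c b := arcAsymm hno harc h5
  have h15 : ¬ A y c := arcAsymm hno harc h8
  have hp16 : p c ≠ p y := arcNePart hno h8
  have h17 : ¬ A y x := arcAsymm hno harc h6
  have h18 : ¬ A w y := arcAsymm hno harc h9
  have hp19 : p y ≠ p w := arcNePart hno h9
  have h20 : ¬ A a c := hno a c hp10
  have h21 : ¬ A c a := hno c a (hp10).symm
  have hp22 : p a ≠ p y := fun hh => (hp16) ((hp10).symm.trans hh)
  have hp23 : p c ≠ p w := fun hh => (hp13) (((hp10).symm).symm.trans hh)
  have h24 : ¬ A b w := fun hh => nab1 w ne_a_w.symm ne_b_w.symm h7 hh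
  have h25 : ¬ A a y := fun hh => nab2 y c ne_a_y.symm ne_b_y.symm ne_a_c.symm hh h5 h8
  have h26 : ¬ A c w := fun hh => nab2 w c ne_a_w.symm ne_b_w.symm ne_a_c.symm h7 h5 hh
  have h27 : ¬ A b y := fun hh => nab2 w y ne_a_w.symm ne_b_w.symm ne_a_y.symm h7 hh h9
  have h28 : ¬ A w c := fun hh => nab2s c w ne_b_c.symm ne_a_c.symm ne_b_w.symm h5 h7 hh
  have h29 : ¬ A b x := fun hh => nbc2s y x ne_c_y.symm ne_b_y.symm ne_c_x.symm h8 hh h6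
  have h30 : ¬ A x w := fun hh => nxy1 w ne_x_w.symm ne_y_w.symm hh h9
  have h31 : ¬ A x a := fun hh => nxy2s w a ne_y_w.symm ne_x_w.symm ne_a_y h9 hh h7
  have h32 : A y a := arcTotal harc hp22 h25
  exact (hp23 (sameOfNoArcs harc h26 h28))


lemma g4II
    (hno : ∀ u v : V, p u = p v → ¬ A u v)
    (harc : ∀ u v : V, p u ≠ p v → (A u v ∨ A v u) ∧ ¬ (A u v ∧ A v u))
    (a b c x y w z : V)
    (ne_a_b : a ≠ b)
    (ne_a_c : a ≠ c)
    (ne_a_x : a ≠ x)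
    (ne_a_y : a ≠ y)
    (ne_a_w : a ≠ w)
    (ne_a_z : a ≠ z)
    (ne_b_c : b ≠ c)
    (ne_b_x : b ≠ x)
    (ne_b_y : b ≠ y)
    (ne_b_w : b ≠ w)
    (ne_b_z : b ≠ z)
    (ne_c_x : c ≠ x)
    (ne_c_y : c ≠ y)
    (ne_c_w : c ≠ w)
    (ne_c_z : c ≠ z)
    (ne_x_y : x ≠ y)
    (ne_x_w : x ≠ w)
    (ne_x_z : x ≠ z)
    (ne_y_w : y ≠ w)
    (ne_y_z : y ≠ z)
    (ne_w_z : w ≠ z)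
    (nabp : p a ≠ p b)
    (nab1 : N1 A a b) (nab2 : N2 A a b) (nab2s : N2 A b a)
    (nbcp : p b ≠ p c)
    (nbc1 : N1 A b c) (nbc2 : N2 A b c) (nbc2s : N2 A c b)
    (nxyp : p x ≠ p y)
    (nxy1 : N1 A x y) (nxy2 : N2 A x y) (nxy2s : N2 A y x)
    (ha1 : A a b)
    (ha2 : A b c)
    (ha3 : A x y)
    (ha4 : A a w)
    (ha5 : A c z)
    (ha6 : A z w)
    (hq7 : p a = p c)
    : False := by
  have hp1 : p a ≠ p b := nabp
  have hp2 : p b ≠ p c := nbcp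
  have hp3 : p x ≠ p y := nxyp
  have h4 : A a b := ha1
  have h5 : A b c := ha2
  have h6 : A x y := ha3
  have h7 : A a w := ha4
  have h8 : A c z := ha5
  have h9 : A z w := ha6
  have hp10 : p a = p c := hq7
  have h11 : ¬ A b a := arcAsymm hno harc h4
  have h12 : ¬ A w a := arcAsymm hno harc h7
  have hp13 : p a ≠ p w := arcNePart hno h7
  have h14 : ¬ A c b := arcAsymm hno harc h5
  have h15 : ¬ A z c := arcAsymm hno harc h8
  have hp16 : p c ≠ p z := arcNePart hno h8
  have h17 : ¬ A y x := arcAsymm hno harc h6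
  have h18 : ¬ A w z := arcAsymm hno harc h9
  have hp19 : p w ≠ p z := Ne.symm (arcNePart hno h9)
  have h20 : ¬ A a c := hno a c hp10
  have h21 : ¬ A c a := hno c a (hp10).symm
  have hp22 : p a ≠ p z := fun hh => (hp16) ((hp10).symm.trans hh)
  have hp23 : p c ≠ p w := fun hh => (hp13) (((hp10).symm).symm.trans hh)
  have h24 : ¬ A b w := fun hh => nab1 w ne_a_w.symm ne_b_w.symm h7 hh
  have h25 : ¬ A c w := fun hh => nab2 w c ne_a_w.symm ne_b_w.symm ne_a_c.symm h7 h5 hh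
  have h26 : ¬ A b z := fun hh => nab2 w z ne_a_w.symm ne_b_w.symm ne_a_z.symm h7 hh h9
  have h27 : ¬ A a z := fun hh => nab2 z c ne_a_z.symm ne_b_z.symm ne_a_c.symm hh h5 h8
  have h28 : ¬ A w c := fun hh => nab2s c w ne_b_c.symm ne_a_c.symm ne_b_w.symm h5 h7 hh
  have h29 : A z a := arcTotal harc hp22 h27
  exact (hp23 (sameOfNoArcs harc h25 h28))


lemma g4III_wx_zb
    (hno : ∀ u v : V, p u = p v → ¬ A u v)
    (harc : ∀ u v : V, p u ≠ p v → (A u v ∨ A v u) ∧ ¬ (A u v ∧ A v u))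
    (a b c x y : V)
    (ne_a_b : a ≠ b)
    (ne_a_c : a ≠ c)
    (ne_a_x : a ≠ x)
    (ne_a_y : a ≠ y)
    (ne_b_c : b ≠ c)
    (ne_b_x : b ≠ x)
    (ne_b_y : b ≠ y)
    (ne_c_x : c ≠ x)
    (ne_c_y : c ≠ y)
    (ne_x_y : x ≠ y)
    (nabp : p a ≠ p b)
    (nab1 : N1 A a b) (nab2 : N2 A a b) (nab2s : N2 A b a)
    (nbcp : p b ≠ p c)
    (nbc1 : N1 A b c) (nbc2 : N2 A b c) (nbc2s : N2 A c b)
    (nxyp : p x ≠ p y)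
    (nxy1 : N1 A x y) (nxy2 : N2 A x y) (nxy2s : N2 A y x)
    (ha1 : A a b)
    (ha2 : A b c)
    (ha3 : A x y)
    (ha4 : A c x)
    (ha5 : A b x)
    (hq6 : p a = p c)
    : False := by
  have hp1 : p a ≠ p b := nabp
  have hp2 : p b ≠ p c := nbcp
  have hp3 : p x ≠ p y := nxyp
  have h4 : A a b := ha1
  have h5 : A b c := ha2
  have h6 : A x y := ha3
  have h7 : A c x := ha4
  have h8 : A b x := ha5
  have hp9 : p a = p c := hq6
  have h10 : ¬ A b a := arcAsymm hno harc h4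
  have h11 : ¬ A c b := arcAsymm hno harc h5
  have h12 : ¬ A x b := arcAsymm hno harc h8
  have hp13 : p b ≠ p x := arcNePart hno h8
  have h14 : ¬ A x c := arcAsymm hno harc h7
  have hp15 : p c ≠ p x := arcNePart hno h7
  have h16 : ¬ A y x := arcAsymm hno harc h6
  have h17 : ¬ A a c := hno a c hp9
  have h18 : ¬ A c a := hno c a (hp9).symm
  have hp19 : p a ≠ p x := fun hh => (hp15) ((hp9).symm.trans hh)
  have h20 : ¬ A a x := fun hh => nab1 x ne_a_x.symm ne_b_x.symm hh h8
  have h21 : ¬ A a y := fun hh => nab2 y x ne_a_y.symm ne_b_y.symm ne_a_x.symm hh h8 h6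
  exact (nbc1 x ne_b_x.symm ne_c_x.symm h8 h7)


lemma g4III_wx
    (hno : ∀ u v : V, p u = p v → ¬ A u v)
    (harc : ∀ u v : V, p u ≠ p v → (A u v ∨ A v u) ∧ ¬ (A u v ∧ A v u))
    (a b c x y z : V)
    (ne_a_b : a ≠ b)
    (ne_a_c : a ≠ c)
    (ne_a_x : a ≠ x)
    (ne_a_y : a ≠ y)
    (ne_a_z : a ≠ z)
    (ne_b_c : b ≠ c)
    (ne_b_x : b ≠ x)
    (ne_b_y : b ≠ y)
    (ne_b_z : b ≠ z)
    (ne_c_x : c ≠ x)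
    (ne_c_y : c ≠ y)
    (ne_c_z : c ≠ z)
    (ne_x_y : x ≠ y)
    (ne_x_z : x ≠ z)
    (ne_y_z : y ≠ z)
    (nabp : p a ≠ p b)
    (nab1 : N1 A a b) (nab2 : N2 A a b) (nab2s : N2 A b a)
    (nbcp : p b ≠ p c)
    (nbc1 : N1 A b c) (nbc2 : N2 A b c) (nbc2s : N2 A c b)
    (nxyp : p x ≠ p y)
    (nxy1 : N1 A x y) (nxy2 : N2 A x y) (nxy2s : N2 A y x)
    (ha1 : A a b)
    (ha2 : A b c)
    (ha3 : A x y)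
    (ha4 : A c x)
    (ha5 : A a z)
    (ha6 : A z x)
    (hq7 : p a = p c)
    : False := by
  have hp1 : p a ≠ p b := nabp
  have hp2 : p b ≠ p c := nbcp
  have hp3 : p x ≠ p y := nxyp
  have h4 : A a b := ha1
  have h5 : A b c := ha2
  have h6 : A x y := ha3
  have h7 : A c x := ha4
  have h8 : A a z := ha5
  have h9 : A z x := ha6
  have hp10 : p a = p c := hq7
  have h11 : ¬ A b a := arcAsymm hno harc h4
  have h12 : ¬ A z a := arcAsymm hno harc h8
  have hp13 : p a ≠ p z := arcNePart hno h8
  have h14 : ¬ A c b := arcAsymm hno harc h5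
  have h15 : ¬ A x c := arcAsymm hno harc h7
  have hp16 : p c ≠ p x := arcNePart hno h7
  have h17 : ¬ A y x := arcAsymm hno harc h6
  have h18 : ¬ A x z := arcAsymm hno harc h9
  have hp19 : p x ≠ p z := Ne.symm (arcNePart hno h9)
  have h20 : ¬ A a c := hno a c hp10
  have h21 : ¬ A c a := hno c a (hp10).symm
  have hp22 : p a ≠ p x := fun hh => (hp16) ((hp10).symm.trans hh)
  have hp23 : p c ≠ p z := fun hh => (hp13) (((hp10).symm).symm.trans hh)
  have h24 : ¬ A b z := fun hh => nab1 z ne_a_z.symm ne_b_z.symm h8 hh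
  have h25 : ¬ A a x := fun hh => nab2 x c ne_a_x.symm ne_b_x.symm ne_a_c.symm hh h5 h7
  have h26 : ¬ A c z := fun hh => nab2 z c ne_a_z.symm ne_b_z.symm ne_a_c.symm h8 h5 hh
  have h27 : ¬ A z c := fun hh => nab2s c z ne_b_c.symm ne_a_c.symm ne_b_z.symm h5 h8 hh
  have h28 : ¬ A b x := fun hh => nab2s x z ne_b_x.symm ne_a_x.symm ne_b_z.symm hh h8 h9
  have h29 : ¬ A b y := fun hh => nbc2 y x ne_b_y.symm ne_c_y.symm ne_b_x.symm hh h7 h6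
  have h30 : A x a := arcTotal harc hp22 h25
  exact (hp23 (sameOfNoArcs harc h26 h27))


lemma g4III_wy_zb
    (hno : ∀ u v : V, p u = p v → ¬ A u v)
    (harc : ∀ u v : V, p u ≠ p v → (A u v ∨ A v u) ∧ ¬ (A u v ∧ A v u))
    (a b c x y : V)
    (ne_a_b : a ≠ b)
    (ne_a_c : a ≠ c)
    (ne_a_x : a ≠ x)
    (ne_a_y : a ≠ y)
    (ne_b_c : b ≠ c)
    (ne_b_x : b ≠ x)
    (ne_b_y : b ≠ y)
    (ne_c_x : c ≠ x)
    (ne_c_y : c ≠ y)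
    (ne_x_y : x ≠ y)
    (nabp : p a ≠ p b)
    (nab1 : N1 A a b) (nab2 : N2 A a b) (nab2s : N2 A b a)
    (nbcp : p b ≠ p c)
    (nbc1 : N1 A b c) (nbc2 : N2 A b c) (nbc2s : N2 A c b)
    (nxyp : p x ≠ p y)
    (nxy1 : N1 A x y) (nxy2 : N2 A x y) (nxy2s : N2 A y x)
    (ha1 : A a b)
    (ha2 : A b c)
    (ha3 : A x y)
    (ha4 : A c y)
    (ha5 : A b y)
    (hq6 : p a = p c)
    : False := by
  have hp1 : p a ≠ p b := nabp
  have hp2 : p b ≠ p c := nbcp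
  have hp3 : p x ≠ p y := nxyp
  have h4 : A a b := ha1
  have h5 : A b c := ha2
  have h6 : A x y := ha3
  have h7 : A c y := ha4
  have h8 : A b y := ha5
  have hp9 : p a = p c := hq6
  have h10 : ¬ A b a := arcAsymm hno harc h4
  have h11 : ¬ A c b := arcAsymm hno harc h5
  have h12 : ¬ A y b := arcAsymm hno harc h8
  have hp13 : p b ≠ p y := arcNePart hno h8
  have h14 : ¬ A y c := arcAsymm hno harc h7
  have hp15 : p c ≠ p y := arcNePart hno h7
  have h16 : ¬ A y x := arcAsymm hno harc h6
  have h17 : ¬ A a c := hno a c hp9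
  have h18 : ¬ A c a := hno c a (hp9).symm
  have hp19 : p a ≠ p y := fun hh => (hp15) ((hp9).symm.trans hh)
  have h20 : ¬ A a y := fun hh => nab1 y ne_a_y.symm ne_b_y.symm hh h8
  have h21 : ¬ A a x := fun hh => nab2s y x ne_b_y.symm ne_a_y.symm ne_b_x.symm h8 hh h6
  exact (nbc1 y ne_b_y.symm ne_c_y.symm h8 h7)


lemma g4III_wy_zx
    (hno : ∀ u v : V, p u = p v → ¬ A u v)
    (harc : ∀ u v : V, p u ≠ p v → (A u v ∨ A v u) ∧ ¬ (A u v ∧ A v u))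
    (a b c x y : V)
    (ne_a_b : a ≠ b)
    (ne_a_c : a ≠ c)
    (ne_a_x : a ≠ x)
    (ne_a_y : a ≠ y)
    (ne_b_c : b ≠ c)
    (ne_b_x : b ≠ x)
    (ne_b_y : b ≠ y)
    (ne_c_x : c ≠ x)
    (ne_c_y : c ≠ y)
    (ne_x_y : x ≠ y)
    (nabp : p a ≠ p b)
    (nab1 : N1 A a b) (nab2 : N2 A a b) (nab2s : N2 A b a)
    (nbcp : p b ≠ p c)
    (nbc1 : N1 A b c) (nbc2 : N2 A b c) (nbc2s : N2 A c b)
    (nxyp : p x ≠ p y)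
    (nxy1 : N1 A x y) (nxy2 : N2 A x y) (nxy2s : N2 A y x)
    (ha1 : A a b)
    (ha2 : A b c)
    (ha3 : A x y)
    (ha4 : A c y)
    (ha5 : A a x)
    (hq6 : p a = p c)
    : False := by
  have hp1 : p a ≠ p b := nabp
  have hp2 : p b ≠ p c := nbcp
  have hp3 : p x ≠ p y := nxyp
  have h4 : A a b := ha1
  have h5 : A b c := ha2
  have h6 : A x y := ha3
  have h7 : A c y := ha4
  have h8 : A a x := ha5
  have hp9 : p a = p c := hq6
  have h10 : ¬ A b a := arcAsymm hno harc h4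
  have h11 : ¬ A x a := arcAsymm hno harc h8
  have hp12 : p a ≠ p x := arcNePart hno h8
  have h13 : ¬ A c b := arcAsymm hno harc h5
  have h14 : ¬ A y c := arcAsymm hno harc h7
  have hp15 : p c ≠ p y := arcNePart hno h7
  have h16 : ¬ A y x := arcAsymm hno harc h6
  have h17 : ¬ A a c := hno a c hp9
  have h18 : ¬ A c a := hno c a (hp9).symm
  have hp19 : p a ≠ p y := fun hh => (hp15) ((hp9).symm.trans hh)
  have hp20 : p c ≠ p x := fun hh => (hp12) (((hp9).symm).symm.trans hh)
  have h21 : ¬ A b x := fun hh => nab1 x ne_a_x.symm ne_b_x.symm h8 hh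
  have h22 : ¬ A c x := fun hh => nab2 x c ne_a_x.symm ne_b_x.symm ne_a_c.symm h8 h5 hh
  have h23 : ¬ A a y := fun hh => nab2 y c ne_a_y.symm ne_b_y.symm ne_a_c.symm hh h5 h7
  have h24 : ¬ A x c := fun hh => nab2s c x ne_b_c.symm ne_a_c.symm ne_b_x.symm h5 h8 hh
  have h25 : ¬ A b y := fun hh => nab2s y x ne_b_y.symm ne_a_y.symm ne_b_x.symm hh h8 h6
  have h26 : A y a := arcTotal harc hp19 h23
  exact (hp20 (sameOfNoArcs harc h22 h24))


lemma g4III_wy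
    (hno : ∀ u v : V, p u = p v → ¬ A u v)
    (harc : ∀ u v : V, p u ≠ p v → (A u v ∨ A v u) ∧ ¬ (A u v ∧ A v u))
    (a b c x y z : V)
    (ne_a_b : a ≠ b)
    (ne_a_c : a ≠ c)
    (ne_a_x : a ≠ x)
    (ne_a_y : a ≠ y)
    (ne_a_z : a ≠ z)
    (ne_b_c : b ≠ c)
    (ne_b_x : b ≠ x)
    (ne_b_y : b ≠ y)
    (ne_b_z : b ≠ z)
    (ne_c_x : c ≠ x)
    (ne_c_y : c ≠ y)
    (ne_c_z : c ≠ z)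
    (ne_x_y : x ≠ y)
    (ne_x_z : x ≠ z)
    (ne_y_z : y ≠ z)
    (nabp : p a ≠ p b)
    (nab1 : N1 A a b) (nab2 : N2 A a b) (nab2s : N2 A b a)
    (nbcp : p b ≠ p c)
    (nbc1 : N1 A b c) (nbc2 : N2 A b c) (nbc2s : N2 A c b)
    (nxyp : p x ≠ p y)
    (nxy1 : N1 A x y) (nxy2 : N2 A x y) (nxy2s : N2 A y x)
    (ha1 : A a b)
    (ha2 : A b c)
    (ha3 : A x y)
    (ha4 : A c y)
    (ha5 : A a z)
    (ha6 : A z y)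
    (hq7 : p a = p c)
    : False := by
  have hp1 : p a ≠ p b := nabp
  have hp2 : p b ≠ p c := nbcp
  have hp3 : p x ≠ p y := nxyp
  have h4 : A a b := ha1
  have h5 : A b c := ha2
  have h6 : A x y := ha3
  have h7 : A c y := ha4
  have h8 : A a z := ha5
  have h9 : A z y := ha6
  have hp10 : p a = p c := hq7
  have h11 : ¬ A b a := arcAsymm hno harc h4
  have h12 : ¬ A z a := arcAsymm hno harc h8
  have hp13 : p a ≠ p z := arcNePart hno h8
  have h14 : ¬ A c b := arcAsymm hno harc h5
  have h15 : ¬ A y c := arcAsymm hno harc h7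
  have hp16 : p c ≠ p y := arcNePart hno h7
  have h17 : ¬ A y x := arcAsymm hno harc h6
  have h18 : ¬ A y z := arcAsymm hno harc h9
  have hp19 : p y ≠ p z := Ne.symm (arcNePart hno h9)
  have h20 : ¬ A a c := hno a c hp10
  have h21 : ¬ A c a := hno c a (hp10).symm
  have hp22 : p a ≠ p y := fun hh => (hp16) ((hp10).symm.trans hh)
  have hp23 : p c ≠ p z := fun hh => (hp13) (((hp10).symm).symm.trans hh)
  have h24 : ¬ A b z := fun hh => nab1 z ne_a_z.symm ne_b_z.symm h8 hh
  have h25 : ¬ A a y := fun hh => nab2 y c ne_a_y.symm ne_b_y.symm ne_a_c.symm hh h5 h7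
  have h26 : ¬ A c z := fun hh => nab2 z c ne_a_z.symm ne_b_z.symm ne_a_c.symm h8 h5 hh
  have h27 : ¬ A z c := fun hh => nab2s c z ne_b_c.symm ne_a_c.symm ne_b_z.symm h5 h8 hh
  have h28 : ¬ A b y := fun hh => nab2s y z ne_b_y.symm ne_a_y.symm ne_b_z.symm hh h8 h9
  have h29 : ¬ A b x := fun hh => nbc2s y x ne_c_y.symm ne_b_y.symm ne_c_x.symm h7 hh h6
  have h30 : A y a := arcTotal harc hp22 h25
  exact (hp23 (sameOfNoArcs harc h26 h27))


lemma g4III_zb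
    (hno : ∀ u v : V, p u = p v → ¬ A u v)
    (harc : ∀ u v : V, p u ≠ p v → (A u v ∨ A v u) ∧ ¬ (A u v ∧ A v u))
    (a b c x y w : V)
    (ne_a_b : a ≠ b)
    (ne_a_c : a ≠ c)
    (ne_a_x : a ≠ x)
    (ne_a_y : a ≠ y)
    (ne_a_w : a ≠ w)
    (ne_b_c : b ≠ c)
    (ne_b_x : b ≠ x)
    (ne_b_y : b ≠ y)
    (ne_b_w : b ≠ w)
    (ne_c_x : c ≠ x)
    (ne_c_y : c ≠ y)
    (ne_c_w : c ≠ w)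
    (ne_x_y : x ≠ y)
    (ne_x_w : x ≠ w)
    (ne_y_w : y ≠ w)
    (nabp : p a ≠ p b)
    (nab1 : N1 A a b) (nab2 : N2 A a b) (nab2s : N2 A b a)
    (nbcp : p b ≠ p c)
    (nbc1 : N1 A b c) (nbc2 : N2 A b c) (nbc2s : N2 A c b)
    (nxyp : p x ≠ p y)
    (nxy1 : N1 A x y) (nxy2 : N2 A x y) (nxy2s : N2 A y x)
    (ha1 : A a b)
    (ha2 : A b c)
    (ha3 : A x y)
    (ha4 : A c w)
    (ha5 : A b w)
    (hq6 : p a = p c)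
    : False := by
  have hp1 : p a ≠ p b := nabp
  have hp2 : p b ≠ p c := nbcp
  have hp3 : p x ≠ p y := nxyp
  have h4 : A a b := ha1
  have h5 : A b c := ha2
  have h6 : A x y := ha3
  have h7 : A c w := ha4
  have h8 : A b w := ha5
  have hp9 : p a = p c := hq6
  have h10 : ¬ A b a := arcAsymm hno harc h4
  have h11 : ¬ A c b := arcAsymm hno harc h5
  have h12 : ¬ A w b := arcAsymm hno harc h8
  have hp13 : p b ≠ p w := arcNePart hno h8
  have h14 : ¬ A w c := arcAsymm hno harc h7
  have hp15 : p c ≠ p w := arcNePart hno h7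
  have h16 : ¬ A y x := arcAsymm hno harc h6
  have h17 : ¬ A a c := hno a c hp9
  have h18 : ¬ A c a := hno c a (hp9).symm
  have hp19 : p a ≠ p w := fun hh => (hp15) ((hp9).symm.trans hh)
  have h20 : ¬ A a w := fun hh => nab1 w ne_a_w.symm ne_b_w.symm hh h8
  exact (nbc1 w ne_b_w.symm ne_c_w.symm h8 h7)


lemma g4III_zx2
    (hno : ∀ u v : V, p u = p v → ¬ A u v)
    (harc : ∀ u v : V, p u ≠ p v → (A u v ∨ A v u) ∧ ¬ (A u v ∧ A v u))
    (a b c x y w : V)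
    (ne_a_b : a ≠ b)
    (ne_a_c : a ≠ c)
    (ne_a_x : a ≠ x)
    (ne_a_y : a ≠ y)
    (ne_a_w : a ≠ w)
    (ne_b_c : b ≠ c)
    (ne_b_x : b ≠ x)
    (ne_b_y : b ≠ y)
    (ne_b_w : b ≠ w)
    (ne_c_x : c ≠ x)
    (ne_c_y : c ≠ y)
    (ne_c_w : c ≠ w)
    (ne_x_y : x ≠ y)
    (ne_x_w : x ≠ w)
    (ne_y_w : y ≠ w)
    (nabp : p a ≠ p b)
    (nab1 : N1 A a b) (nab2 : N2 A a b) (nab2s : N2 A b a)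
    (nbcp : p b ≠ p c)
    (nbc1 : N1 A b c) (nbc2 : N2 A b c) (nbc2s : N2 A c b)
    (nxyp : p x ≠ p y)
    (nxy1 : N1 A x y) (nxy2 : N2 A x y) (nxy2s : N2 A y x)
    (ha1 : A a b)
    (ha2 : A b c)
    (ha3 : A x y)
    (ha4 : A c w)
    (ha5 : A a x)
    (ha6 : A x w)
    (hq7 : p a = p c)
    : False := by
  have hp1 : p a ≠ p b := nabp
  have hp2 : p b ≠ p c := nbcp
  have hp3 : p x ≠ p y := nxyp
  have h4 : A a b := ha1
  have h5 : A b c := ha2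
  have h6 : A x y := ha3
  have h7 : A c w := ha4
  have h8 : A a x := ha5
  have h9 : A x w := ha6
  have hp10 : p a = p c := hq7
  have h11 : ¬ A b a := arcAsymm hno harc h4
  have h12 : ¬ A x a := arcAsymm hno harc h8
  have hp13 : p a ≠ p x := arcNePart hno h8
  have h14 : ¬ A c b := arcAsymm hno harc h5
  have h15 : ¬ A w c := arcAsymm hno harc h7
  have hp16 : p c ≠ p w := arcNePart hno h7
  have h17 : ¬ A y x := arcAsymm hno harc h6
  have h18 : ¬ A w x := arcAsymm hno harc h9
  have hp19 : p x ≠ p w := arcNePart hno h9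
  have h20 : ¬ A a c := hno a c hp10
  have h21 : ¬ A c a := hno c a (hp10).symm
  have hp22 : p a ≠ p w := fun hh => (hp16) ((hp10).symm.trans hh)
  have hp23 : p c ≠ p x := fun hh => (hp13) (((hp10).symm).symm.trans hh)
  have h24 : ¬ A b x := fun hh => nab1 x ne_a_x.symm ne_b_x.symm h8 hh
  have h25 : ¬ A c x := fun hh => nab2 x c ne_a_x.symm ne_b_x.symm ne_a_c.symm h8 h5 hh
  have h26 : ¬ A a w := fun hh => nab2 w c ne_a_w.symm ne_b_w.symm ne_a_c.symm hh h5 h7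
  have h27 : ¬ A x c := fun hh => nab2s c x ne_b_c.symm ne_a_c.symm ne_b_x.symm h5 h8 hh
  have h28 : ¬ A b y := fun hh => nab2s y x ne_b_y.symm ne_a_y.symm ne_b_x.symm hh h8 h6
  have h29 : ¬ A b w := fun hh => nab2s w x ne_b_w.symm ne_a_w.symm ne_b_x.symm hh h8 h9
  have h30 : ¬ A y w := fun hh => nxy1 w ne_x_w.symm ne_y_w.symm h9 hh
  have h31 : ¬ A y c := fun hh => nxy2 w c ne_x_w.symm ne_y_w.symm ne_c_x h9 hh h7
  have h32 : A w a := arcTotal harc hp22 h26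
  exact (hp23 (sameOfNoArcs harc h25 h27))


lemma g4III_zy2
    (hno : ∀ u v : V, p u = p v → ¬ A u v)
    (harc : ∀ u v : V, p u ≠ p v → (A u v ∨ A v u) ∧ ¬ (A u v ∧ A v u))
    (a b c x y w : V)
    (ne_a_b : a ≠ b)
    (ne_a_c : a ≠ c)
    (ne_a_x : a ≠ x)
    (ne_a_y : a ≠ y)
    (ne_a_w : a ≠ w)
    (ne_b_c : b ≠ c)
    (ne_b_x : b ≠ x)
    (ne_b_y : b ≠ y)
    (ne_b_w : b ≠ w)
    (ne_c_x : c ≠ x)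
    (ne_c_y : c ≠ y)
    (ne_c_w : c ≠ w)
    (ne_x_y : x ≠ y)
    (ne_x_w : x ≠ w)
    (ne_y_w : y ≠ w)
    (nabp : p a ≠ p b)
    (nab1 : N1 A a b) (nab2 : N2 A a b) (nab2s : N2 A b a)
    (nbcp : p b ≠ p c)
    (nbc1 : N1 A b c) (nbc2 : N2 A b c) (nbc2s : N2 A c b)
    (nxyp : p x ≠ p y)
    (nxy1 : N1 A x y) (nxy2 : N2 A x y) (nxy2s : N2 A y x)
    (ha1 : A a b)
    (ha2 : A b c)
    (ha3 : A x y)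
    (ha4 : A c w)
    (ha5 : A a y)
    (ha6 : A y w)
    (hq7 : p a = p c)
    : False := by
  have hp1 : p a ≠ p b := nabp
  have hp2 : p b ≠ p c := nbcp
  have hp3 : p x ≠ p y := nxyp
  have h4 : A a b := ha1
  have h5 : A b c := ha2
  have h6 : A x y := ha3
  have h7 : A c w := ha4
  have h8 : A a y := ha5
  have h9 : A y w := ha6
  have hp10 : p a = p c := hq7
  have h11 : ¬ A b a := arcAsymm hno harc h4
  have h12 : ¬ A y a := arcAsymm hno harc h8
  have hp13 : p a ≠ p y := arcNePart hno h8
  have h14 : ¬ A c b := arcAsymm hno harc h5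
  have h15 : ¬ A w c := arcAsymm hno harc h7
  have hp16 : p c ≠ p w := arcNePart hno h7
  have h17 : ¬ A y x := arcAsymm hno harc h6
  have h18 : ¬ A w y := arcAsymm hno harc h9
  have hp19 : p y ≠ p w := arcNePart hno h9
  have h20 : ¬ A a c := hno a c hp10
  have h21 : ¬ A c a := hno c a (hp10).symm
  have hp22 : p a ≠ p w := fun hh => (hp16) ((hp10).symm.trans hh)
  have hp23 : p c ≠ p y := fun hh => (hp13) (((hp10).symm).symm.trans hh)
  have h24 : ¬ A b y := fun hh => nab1 y ne_a_y.symm ne_b_y.symm h8 hh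
  have h25 : ¬ A c y := fun hh => nab2 y c ne_a_y.symm ne_b_y.symm ne_a_c.symm h8 h5 hh
  have h26 : ¬ A b x := fun hh => nab2 y x ne_a_y.symm ne_b_y.symm ne_a_x.symm h8 hh h6
  have h27 : ¬ A a w := fun hh => nab2 w c ne_a_w.symm ne_b_w.symm ne_a_c.symm hh h5 h7
  have h28 : ¬ A y c := fun hh => nab2s c y ne_b_c.symm ne_a_c.symm ne_b_y.symm h5 h8 hh
  have h29 : ¬ A b w := fun hh => nab2s w y ne_b_w.symm ne_a_w.symm ne_b_y.symm hh h8 h9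
  have h30 : ¬ A x w := fun hh => nxy1 w ne_x_w.symm ne_y_w.symm hh h9
  have h31 : ¬ A x c := fun hh => nxy2s w c ne_y_w.symm ne_x_w.symm ne_c_y h9 hh h7
  have h32 : A w a := arcTotal harc hp22 h27
  exact (hp23 (sameOfNoArcs harc h25 h28))


lemma g4III
    (hno : ∀ u v : V, p u = p v → ¬ A u v)
    (harc : ∀ u v : V, p u ≠ p v → (A u v ∨ A v u) ∧ ¬ (A u v ∧ A v u))
    (a b c x y w z : V)
    (ne_a_b : a ≠ b)
    (ne_a_c : a ≠ c)
    (ne_a_x : a ≠ x)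
    (ne_a_y : a ≠ y)
    (ne_a_w : a ≠ w)
    (ne_a_z : a ≠ z)
    (ne_b_c : b ≠ c)
    (ne_b_x : b ≠ x)
    (ne_b_y : b ≠ y)
    (ne_b_w : b ≠ w)
    (ne_b_z : b ≠ z)
    (ne_c_x : c ≠ x)
    (ne_c_y : c ≠ y)
    (ne_c_w : c ≠ w)
    (ne_c_z : c ≠ z)
    (ne_x_y : x ≠ y)
    (ne_x_w : x ≠ w)
    (ne_x_z : x ≠ z)
    (ne_y_w : y ≠ w)
    (ne_y_z : y ≠ z)
    (ne_w_z : w ≠ z)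
    (nabp : p a ≠ p b)
    (nab1 : N1 A a b) (nab2 : N2 A a b) (nab2s : N2 A b a)
    (nbcp : p b ≠ p c)
    (nbc1 : N1 A b c) (nbc2 : N2 A b c) (nbc2s : N2 A c b)
    (nxyp : p x ≠ p y)
    (nxy1 : N1 A x y) (nxy2 : N2 A x y) (nxy2s : N2 A y x)
    (ha1 : A a b)
    (ha2 : A b c)
    (ha3 : A x y)
    (ha4 : A c w)
    (ha5 : A a z)
    (ha6 : A z w)
    (hq7 : p a = p c)
    : False := by
  have hp1 : p a ≠ p b := nabp
  have hp2 : p b ≠ p c := nbcp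
  have hp3 : p x ≠ p y := nxyp
  have h4 : A a b := ha1
  have h5 : A b c := ha2
  have h6 : A x y := ha3
  have h7 : A c w := ha4
  have h8 : A a z := ha5
  have h9 : A z w := ha6
  have hp10 : p a = p c := hq7
  have h11 : ¬ A b a := arcAsymm hno harc h4
  have h12 : ¬ A z a := arcAsymm hno harc h8
  have hp13 : p a ≠ p z := arcNePart hno h8
  have h14 : ¬ A c b := arcAsymm hno harc h5
  have h15 : ¬ A w c := arcAsymm hno harc h7
  have hp16 : p c ≠ p w := arcNePart hno h7
  have h17 : ¬ A y x := arcAsymm hno harc h6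
  have h18 : ¬ A w z := arcAsymm hno harc h9
  have hp19 : p w ≠ p z := Ne.symm (arcNePart hno h9)
  have h20 : ¬ A a c := hno a c hp10
  have h21 : ¬ A c a := hno c a (hp10).symm
  have hp22 : p a ≠ p w := fun hh => (hp16) ((hp10).symm.trans hh)
  have hp23 : p c ≠ p z := fun hh => (hp13) (((hp10).symm).symm.trans hh)
  have h24 : ¬ A b z := fun hh => nab1 z ne_a_z.symm ne_b_z.symm h8 hh
  have h25 : ¬ A a w := fun hh => nab2 w c ne_a_w.symm ne_b_w.symm ne_a_c.symm hh h5 h7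
  have h26 : ¬ A c z := fun hh => nab2 z c ne_a_z.symm ne_b_z.symm ne_a_c.symm h8 h5 hh
  have h27 : ¬ A z c := fun hh => nab2s c z ne_b_c.symm ne_a_c.symm ne_b_z.symm h5 h8 hh
  have h28 : ¬ A b w := fun hh => nab2s w z ne_b_w.symm ne_a_w.symm ne_b_z.symm hh h8 h9
  have h29 : A w a := arcTotal harc hp22 h25
  exact (hp23 (sameOfNoArcs harc h26 h27))


lemma c4I
    (hno : ∀ u v : V, p u = p v → ¬ A u v)
    (harc : ∀ u v : V, p u ≠ p v → (A u v ∨ A v u) ∧ ¬ (A u v ∧ A v u))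
    (a b c d w : V)
    (ne_a_b : a ≠ b)
    (ne_a_c : a ≠ c)
    (ne_a_d : a ≠ d)
    (ne_a_w : a ≠ w)
    (ne_b_c : b ≠ c)
    (ne_b_d : b ≠ d)
    (ne_b_w : b ≠ w)
    (ne_c_d : c ≠ d)
    (ne_c_w : c ≠ w)
    (ne_d_w : d ≠ w)
    (nabp : p a ≠ p b)
    (nab1 : N1 A a b) (nab2 : N2 A a b) (nab2s : N2 A b a)
    (nbcp : p b ≠ p c)
    (nbc1 : N1 A b c) (nbc2 : N2 A b c) (nbc2s : N2 A c b)
    (ncdp : p c ≠ p d)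
    (ncd1 : N1 A c d) (ncd2 : N2 A c d) (ncd2s : N2 A d c)
    (ndap : p d ≠ p a)
    (nda1 : N1 A d a) (nda2 : N2 A d a) (nda2s : N2 A a d)
    (ha1 : A a b)
    (ha2 : A b c)
    (ha3 : A c d)
    (ha4 : A d a)
    (ha5 : A a w)
    (ha6 : A c w)
    (hq7 : p a = p c)
    (hq8 : p b = p d)
    : False := by
  have hp1 : p a ≠ p b := nabp
  have hp2 : p b ≠ p c := nbcp
  have hp3 : p c ≠ p d := ncdp
  have hp4 : p a ≠ p d := Ne.symm (ndap)
  have h5 : A a b := ha1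
  have h6 : A b c := ha2
  have h7 : A c d := ha3
  have h8 : A d a := ha4
  have h9 : A a w := ha5
  have h10 : A c w := ha6
  have hp11 : p a = p c := hq7
  have hp12 : p b = p d := hq8
  have h13 : ¬ A b a := arcAsymm hno harc h5
  have h14 : ¬ A w a := arcAsymm hno harc h9
  have hp15 : p a ≠ p w := arcNePart hno h9
  have h16 : ¬ A c b := arcAsymm hno harc h6
  have h17 : ¬ A d c := arcAsymm hno harc h7
  have h18 : ¬ A w c := arcAsymm hno harc h10
  have hp19 : p c ≠ p w := arcNePart hno h10
  have h20 : ¬ A a d := arcAsymm hno harc h8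
  have h21 : ¬ A a c := hno a c hp11
  have h22 : ¬ A c a := hno c a (hp11).symm
  have h23 : ¬ A b d := hno b d hp12
  have h24 : ¬ A d b := hno d b (hp12).symm
  have h25 : ¬ A b w := fun hh => nab1 w ne_a_w.symm ne_b_w.symm h9 hh
  exact (nab2 w c ne_a_w.symm ne_b_w.symm ne_a_c.symm h9 h6 h10)


lemma c4II_wb
    (hno : ∀ u v : V, p u = p v → ¬ A u v)
    (harc : ∀ u v : V, p u ≠ p v → (A u v ∨ A v u) ∧ ¬ (A u v ∧ A v u))
    (a b c d z : V)
    (ne_a_b : a ≠ b)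
    (ne_a_c : a ≠ c)
    (ne_a_d : a ≠ d)
    (ne_a_z : a ≠ z)
    (ne_b_c : b ≠ c)
    (ne_b_d : b ≠ d)
    (ne_b_z : b ≠ z)
    (ne_c_d : c ≠ d)
    (ne_c_z : c ≠ z)
    (ne_d_z : d ≠ z)
    (nabp : p a ≠ p b)
    (nab1 : N1 A a b) (nab2 : N2 A a b) (nab2s : N2 A b a)
    (nbcp : p b ≠ p c)
    (nbc1 : N1 A b c) (nbc2 : N2 A b c) (nbc2s : N2 A c b)
    (ncdp : p c ≠ p d)
    (ncd1 : N1 A c d) (ncd2 : N2 A c d) (ncd2s : N2 A d c)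
    (ndap : p d ≠ p a)
    (nda1 : N1 A d a) (nda2 : N2 A d a) (nda2s : N2 A a d)
    (ha1 : A a b)
    (ha2 : A b c)
    (ha3 : A c d)
    (ha4 : A d a)
    (ha5 : A c z)
    (ha6 : A z b)
    (hq7 : p a = p c)
    (hq8 : p b = p d)
    : False := by
  have hp1 : p a ≠ p b := nabp
  have hp2 : p b ≠ p c := nbcp
  have hp3 : p c ≠ p d := ncdp
  have hp4 : p a ≠ p d := Ne.symm (ndap)
  have h5 : A a b := ha1
  have h6 : A b c := ha2
  have h7 : A c d := ha3
  have h8 : A d a := ha4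
  have h9 : A c z := ha5
  have h10 : A z b := ha6
  have hp11 : p a = p c := hq7
  have hp12 : p b = p d := hq8
  have h13 : ¬ A b a := arcAsymm hno harc h5
  have h14 : ¬ A c b := arcAsymm hno harc h6
  have h15 : ¬ A d c := arcAsymm hno harc h7
  have h16 : ¬ A z c := arcAsymm hno harc h9
  have hp17 : p c ≠ p z := arcNePart hno h9
  have h18 : ¬ A a d := arcAsymm hno harc h8
  have h19 : ¬ A b z := arcAsymm hno harc h10
  have hp20 : p b ≠ p z := Ne.symm (arcNePart hno h10)
  have h21 : ¬ A a c := hno a c hp11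
  have h22 : ¬ A c a := hno c a (hp11).symm
  have h23 : ¬ A b d := hno b d hp12
  have h24 : ¬ A d b := hno d b (hp12).symm
  have hp25 : p a ≠ p z := fun hh => (hp17) ((hp11).symm.trans hh)
  have hp26 : p d ≠ p z := fun hh => (hp20) (((hp12).symm).symm.trans hh)
  have h27 : ¬ A a z := fun hh => nab2 z c ne_a_z.symm ne_b_z.symm ne_a_c.symm hh h6 h9
  have h28 : ¬ A d z := fun hh => ncd1 z ne_c_z.symm ne_d_z.symm h9 hh
  have h29 : ¬ A z a := fun hh => ncd2s a z ne_a_d ne_a_c ne_d_z.symm h8 h9 hh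
  exact (hp25 (sameOfNoArcs harc h27 h29))


lemma c4II_zd
    (hno : ∀ u v : V, p u = p v → ¬ A u v)
    (harc : ∀ u v : V, p u ≠ p v → (A u v ∨ A v u) ∧ ¬ (A u v ∧ A v u))
    (a b c d w : V)
    (ne_a_b : a ≠ b)
    (ne_a_c : a ≠ c)
    (ne_a_d : a ≠ d)
    (ne_a_w : a ≠ w)
    (ne_b_c : b ≠ c)
    (ne_b_d : b ≠ d)
    (ne_b_w : b ≠ w)
    (ne_c_d : c ≠ d)
    (ne_c_w : c ≠ w)
    (ne_d_w : d ≠ w)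
    (nabp : p a ≠ p b)
    (nab1 : N1 A a b) (nab2 : N2 A a b) (nab2s : N2 A b a)
    (nbcp : p b ≠ p c)
    (nbc1 : N1 A b c) (nbc2 : N2 A b c) (nbc2s : N2 A c b)
    (ncdp : p c ≠ p d)
    (ncd1 : N1 A c d) (ncd2 : N2 A c d) (ncd2s : N2 A d c)
    (ndap : p d ≠ p a)
    (nda1 : N1 A d a) (nda2 : N2 A d a) (nda2s : N2 A a d)
    (ha1 : A a b)
    (ha2 : A b c)
    (ha3 : A c d)
    (ha4 : A d a)
    (ha5 : A a w)
    (ha6 : A d w)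
    (hq7 : p a = p c)
    (hq8 : p b = p d)
    : False := by
  have hp1 : p a ≠ p b := nabp
  have hp2 : p b ≠ p c := nbcp
  have hp3 : p c ≠ p d := ncdp
  have hp4 : p a ≠ p d := Ne.symm (ndap)
  have h5 : A a b := ha1
  have h6 : A b c := ha2
  have h7 : A c d := ha3
  have h8 : A d a := ha4
  have h9 : A a w := ha5
  have h10 : A d w := ha6
  have hp11 : p a = p c := hq7
  have hp12 : p b = p d := hq8
  have h13 : ¬ A b a := arcAsymm hno harc h5
  have h14 : ¬ A w a := arcAsymm hno harc h9
  have hp15 : p a ≠ p w := arcNePart hno h9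
  have h16 : ¬ A c b := arcAsymm hno harc h6
  have h17 : ¬ A d c := arcAsymm hno harc h7
  have h18 : ¬ A a d := arcAsymm hno harc h8
  have h19 : ¬ A w d := arcAsymm hno harc h10
  have hp20 : p d ≠ p w := arcNePart hno h10
  have h21 : ¬ A a c := hno a c hp11
  have h22 : ¬ A c a := hno c a (hp11).symm
  have h23 : ¬ A b d := hno b d hp12
  have h24 : ¬ A d b := hno d b (hp12).symm
  have hp25 : p b ≠ p w := fun hh => (hp20) ((hp12).symm.trans hh)
  have hp26 : p c ≠ p w := fun hh => (hp15) (((hp11).symm).symm.trans hh)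
  have h27 : ¬ A b w := fun hh => nab1 w ne_a_w.symm ne_b_w.symm h9 hh
  have h28 : ¬ A c w := fun hh => nab2 w c ne_a_w.symm ne_b_w.symm ne_a_c.symm h9 h6 hh
  have h29 : ¬ A w c := fun hh => nab2s c w ne_b_c.symm ne_a_c.symm ne_b_w.symm h6 h9 hh
  exact (nda1 w ne_d_w.symm ne_a_w.symm h10 h9)


lemma c4II
    (hno : ∀ u v : V, p u = p v → ¬ A u v)
    (harc : ∀ u v : V, p u ≠ p v → (A u v ∨ A v u) ∧ ¬ (A u v ∧ A v u))
    (a b c d w z : V)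
    (ne_a_b : a ≠ b)
    (ne_a_c : a ≠ c)
    (ne_a_d : a ≠ d)
    (ne_a_w : a ≠ w)
    (ne_a_z : a ≠ z)
    (ne_b_c : b ≠ c)
    (ne_b_d : b ≠ d)
    (ne_b_w : b ≠ w)
    (ne_b_z : b ≠ z)
    (ne_c_d : c ≠ d)
    (ne_c_w : c ≠ w)
    (ne_c_z : c ≠ z)
    (ne_d_w : d ≠ w)
    (ne_d_z : d ≠ z)
    (ne_w_z : w ≠ z)
    (nabp : p a ≠ p b)
    (nab1 : N1 A a b) (nab2 : N2 A a b) (nab2s : N2 A b a)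
    (nbcp : p b ≠ p c)
    (nbc1 : N1 A b c) (nbc2 : N2 A b c) (nbc2s : N2 A c b)
    (ncdp : p c ≠ p d)
    (ncd1 : N1 A c d) (ncd2 : N2 A c d) (ncd2s : N2 A d c)
    (ndap : p d ≠ p a)
    (nda1 : N1 A d a) (nda2 : N2 A d a) (nda2s : N2 A a d)
    (ha1 : A a b)
    (ha2 : A b c)
    (ha3 : A c d)
    (ha4 : A d a)
    (ha5 : A a w)
    (ha6 : A c z)
    (ha7 : A z w)
    (hq8 : p a = p c)
    (hq9 : p b = p d)
    : False := by
  have hp1 : p a ≠ p b := nabp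
  have hp2 : p b ≠ p c := nbcp
  have hp3 : p c ≠ p d := ncdp
  have hp4 : p a ≠ p d := Ne.symm (ndap)
  have h5 : A a b := ha1
  have h6 : A b c := ha2
  have h7 : A c d := ha3
  have h8 : A d a := ha4
  have h9 : A a w := ha5
  have h10 : A c z := ha6
  have h11 : A z w := ha7
  have hp12 : p a = p c := hq8
  have hp13 : p b = p d := hq9
  have h14 : ¬ A b a := arcAsymm hno harc h5
  have h15 : ¬ A w a := arcAsymm hno harc h9
  have hp16 : p a ≠ p w := arcNePart hno h9
  have h17 : ¬ A c b := arcAsymm hno harc h6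
  have h18 : ¬ A d c := arcAsymm hno harc h7
  have h19 : ¬ A z c := arcAsymm hno harc h10
  have hp20 : p c ≠ p z := arcNePart hno h10
  have h21 : ¬ A a d := arcAsymm hno harc h8
  have h22 : ¬ A w z := arcAsymm hno harc h11
  have hp23 : p w ≠ p z := Ne.symm (arcNePart hno h11)
  have h24 : ¬ A a c := hno a c hp12
  have h25 : ¬ A c a := hno c a (hp12).symm
  have h26 : ¬ A b d := hno b d hp13
  have h27 : ¬ A d b := hno d b (hp13).symm
  have hp28 : p a ≠ p z := fun hh => (hp20) ((hp12).symm.trans hh)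
  have hp29 : p c ≠ p w := fun hh => (hp16) (((hp12).symm).symm.trans hh)
  have h30 : ¬ A b w := fun hh => nab1 w ne_a_w.symm ne_b_w.symm h9 hh
  have h31 : ¬ A c w := fun hh => nab2 w c ne_a_w.symm ne_b_w.symm ne_a_c.symm h9 h6 hh
  have h32 : ¬ A b z := fun hh => nab2 w z ne_a_w.symm ne_b_w.symm ne_a_z.symm h9 hh h11
  have h33 : ¬ A a z := fun hh => nab2 z c ne_a_z.symm ne_b_z.symm ne_a_c.symm hh h6 h10
  have h34 : ¬ A w c := fun hh => nab2s c w ne_b_c.symm ne_a_c.symm ne_b_w.symm h6 h9 hh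
  have h35 : ¬ A d z := fun hh => ncd1 z ne_c_z.symm ne_d_z.symm h10 hh
  have h36 : ¬ A z a := fun hh => ncd2s a z ne_a_d ne_a_c ne_d_z.symm h8 h10 hh
  have h37 : ¬ A d w := fun hh => ncd2s w z ne_d_w.symm ne_c_w.symm ne_d_z.symm hh h10 h11
  exact (hp28 (sameOfNoArcs harc h33 h36))


end Generated

section Wrappers
variable {V : Type*} {ι : Type*} {A : V → V → Prop} {p : V → ι}

/-- A non-competing pair (edge of the complement graph) with part info. -/
def NCP (A : V → V → Prop) (p : V → ι) (u v : V) : Prop :=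
  u ≠ v ∧ p u ≠ p v ∧ ¬ CompAdj A u v

lemma NCP.ne {u v : V} (h : NCP A p u v) : u ≠ v := h.1
lemma NCP.pne {u v : V} (h : NCP A p u v) : p u ≠ p v := h.2.1
lemma NCP.toN1 {u v : V} (h : NCP A p u v) : N1 A u v := nc1 h.1 h.2.2
lemma NCP.toN2 {u v : V} (h : NCP A p u v) : N2 A u v := nc2 h.1 h.2.2
lemma NCP.symm {u v : V} (h : NCP A p u v) : NCP A p v u :=
  ⟨h.1.symm, h.2.1.symm, fun hc => h.2.2 (compAdj_symm hc)⟩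
lemma NCP.toN2s {u v : V} (h : NCP A p u v) : N2 A v u := h.symm.toN2

lemma no_self_arc (hno : ∀ u v : V, p u = p v → ¬ A u v) (i : V) : ¬ A i i := hno i i rfl

/-- No vertex beats both of its complement-neighbors. -/
lemma noBothOut (hno : ∀ u v : V, p u = p v → ¬ A u v)
    (harc : ∀ u v : V, p u ≠ p v → (A u v ∨ A v u) ∧ ¬ (A u v ∧ A v u))
    (htight : ∀ u v : V, u ≠ v → p u = p v → CompAdj A u v)
    (a b c : V) (hab : NCP A p a b) (hbc : NCP A p b c)
    (ne_a_c : a ≠ c) (h1 : A b a) (h2 : A b c) : False := by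
  have hnac : ¬ A a c := fun h => hab.toN1 c ne_a_c.symm hbc.ne.symm h h2
  have hnca : ¬ A c a := fun h => hbc.toN1 a hab.ne ne_a_c h1 h
  have hpac : p a = p c := sameOfNoArcs harc hnac hnca
  obtain ⟨-, w, hwa, hwc, hcase⟩ := htight a c ne_a_c hpac
  have hwb1 : A a w → w ≠ b := fun haw he => arcAsymm hno harc h1 (he ▸ haw)
  have hwb2 : A c w → w ≠ b := fun hcw he => arcAsymm hno harc h2 (he ▸ hcw)
  rcases hcase with ⟨haw, hcw | ⟨z, hza, hcz, hzw⟩⟩ | ⟨hcw, haw | ⟨z, hzc, haz, hzw⟩⟩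
  · exact g2w1 hno harc (a := a) (b := b) (c := c) (w := w)
      (ne_a_b := hab.ne) (ne_a_c := ne_a_c) (ne_a_w := hwa.symm)
      (ne_b_c := hbc.ne) (ne_b_w := (hwb1 haw).symm) (ne_c_w := hwc.symm)
      (nabp := hab.pne) (nab1 := hab.toN1) (nab2 := hab.toN2) (nab2s := hab.toN2s)
      (nbcp := hbc.pne) (nbc1 := hbc.toN1) (nbc2 := hbc.toN2) (nbc2s := hbc.toN2s)
      (ha1 := h1) (ha2 := h2) (ha3 := haw) (ha4 := hcw)
  · have hzb : z ≠ b := fun he => arcAsymm hno harc h2 (he ▸ hcz)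
    have hzc' : z ≠ c := fun he => no_self_arc hno c (he ▸ hcz)
    have hzw' : z ≠ w := fun he => no_self_arc hno w (he ▸ hzw)
    exact g2w2 hno harc (a := a) (b := b) (c := c) (w := w) (z := z)
      (ne_a_b := hab.ne) (ne_a_c := ne_a_c) (ne_a_w := hwa.symm) (ne_a_z := hza.symm)
      (ne_b_c := hbc.ne) (ne_b_w := (hwb1 haw).symm) (ne_b_z := hzb.symm)
      (ne_c_w := hwc.symm) (ne_c_z := hzc'.symm) (ne_w_z := hzw'.symm)
      (nabp := hab.pne) (nab1 := hab.toN1) (nab2 := hab.toN2) (nab2s := hab.toN2s)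
      (nbcp := hbc.pne) (nbc1 := hbc.toN1) (nbc2 := hbc.toN2) (nbc2s := hbc.toN2s)
      (ha1 := h1) (ha2 := h2) (ha3 := haw) (ha4 := hcz) (ha5 := hzw)
  · exact g2w1 hno harc (a := a) (b := b) (c := c) (w := w)
      (ne_a_b := hab.ne) (ne_a_c := ne_a_c) (ne_a_w := hwa.symm)
      (ne_b_c := hbc.ne) (ne_b_w := (hwb1 haw).symm) (ne_c_w := hwc.symm)
      (nabp := hab.pne) (nab1 := hab.toN1) (nab2 := hab.toN2) (nab2s := hab.toN2s)
      (nbcp := hbc.pne) (nbc1 := hbc.toN1) (nbc2 := hbc.toN2) (nbc2s := hbc.toN2s)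
      (ha1 := h1) (ha2 := h2) (ha3 := haw) (ha4 := hcw)
  · -- symmetric: swap roles a ↔ c
    have hzb : z ≠ b := fun he => arcAsymm hno harc h1 (he ▸ haz)
    have hza' : z ≠ a := fun he => no_self_arc hno a (he ▸ haz)
    have hzw' : z ≠ w := fun he => no_self_arc hno w (he ▸ hzw)
    exact g2w2 hno harc (a := c) (b := b) (c := a) (w := w) (z := z)
      (ne_a_b := hbc.ne.symm) (ne_a_c := ne_a_c.symm) (ne_a_w := hwc.symm) (ne_a_z := hzc.symm)
      (ne_b_c := hab.ne.symm) (ne_b_w := (hwb2 hcw).symm) (ne_b_z := hzb.symm)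
      (ne_c_w := hwa.symm) (ne_c_z := hza'.symm) (ne_w_z := hzw'.symm)
      (nabp := hbc.symm.pne) (nab1 := hbc.symm.toN1) (nab2 := hbc.symm.toN2) (nab2s := hbc.symm.toN2s)
      (nbcp := hab.symm.pne) (nbc1 := hab.symm.toN1) (nbc2 := hab.symm.toN2) (nbc2s := hab.symm.toN2s)
      (ha1 := h2) (ha2 := h1) (ha3 := hcw) (ha4 := haz) (ha5 := hzw)



lemma noDirPath (hno : ∀ u v : V, p u = p v → ¬ A u v)
    (harc : ∀ u v : V, p u ≠ p v → (A u v ∨ A v u) ∧ ¬ (A u v ∧ A v u))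
    (htight : ∀ u v : V, u ≠ v → p u = p v → CompAdj A u v)
    (a b c x y : V)
    (hab : NCP A p a b) (hbc : NCP A p b c) (hxy : NCP A p x y)
    (ne_a_c : a ≠ c)
    (ne_a_x : a ≠ x) (ne_a_y : a ≠ y) (ne_b_x : b ≠ x) (ne_b_y : b ≠ y)
    (ne_c_x : c ≠ x) (ne_c_y : c ≠ y)
    (h1 : A a b) (h2 : A b c) (h3 : A x y) : False := by
  have hnac : ¬ A a c := fun h => hab.toN1 c ne_a_c.symm hbc.ne.symm h h2
  have hnca : ¬ A c a := fun h =>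
    g4ca hno harc a b c x y hab.ne ne_a_c ne_a_x ne_a_y hbc.ne ne_b_x ne_b_y ne_c_x ne_c_y hxy.ne hab.pne hab.toN1 hab.toN2 hab.toN2s hbc.pne hbc.toN1 hbc.toN2 hbc.toN2s hxy.pne hxy.toN1 hxy.toN2 hxy.toN2s h1 h2 h3 h
  have hpac : p a = p c := sameOfNoArcs harc hnac hnca
  obtain ⟨-, w, hwa, hwc, hcase⟩ := htight a c ne_a_c hpac
  rcases hcase with ⟨haw, hcw | ⟨z, hza, hcz, hzw⟩⟩ | ⟨hcw, haw | ⟨z, hzc, haz, hzw⟩⟩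
  · -- Case I : A a w ∧ A c w
    have hwb : w ≠ b := fun he => arcAsymm hno harc h2 (he ▸ hcw)
    by_cases hwx : w = x
    · exact g4I_x hno harc a b c x y hab.ne ne_a_c ne_a_x ne_a_y hbc.ne ne_b_x ne_b_y ne_c_x ne_c_y hxy.ne hab.pne hab.toN1 hab.toN2 hab.toN2s hbc.pne hbc.toN1 hbc.toN2 hbc.toN2s hxy.pne hxy.toN1 hxy.toN2 hxy.toN2s h1 h2 h3 (hwx ▸ haw) (hwx ▸ hcw) hpac
    by_cases hwy : w = y
    · exact g4I_y hno harc a b c x y hab.ne ne_a_c ne_a_x ne_a_y hbc.ne ne_b_x ne_b_y ne_c_x ne_c_y hxy.ne hab.pne hab.toN1 hab.toN2 hab.toN2s hbc.pne hbc.toN1 hbc.toN2 hbc.toN2s hxy.pne hxy.toN1 hxy.toN2 hxy.toN2s h1 h2 h3 (hwy ▸ haw) (hwy ▸ hcw) hpac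
    exact g4I hno harc a b c x y w hab.ne ne_a_c ne_a_x ne_a_y hwa.symm hbc.ne ne_b_x ne_b_y hwb.symm ne_c_x ne_c_y hwc.symm hxy.ne (fun he => hwx he.symm) (fun he => hwy he.symm) hab.pne hab.toN1 hab.toN2 hab.toN2s hbc.pne hbc.toN1 hbc.toN2 hbc.toN2s hxy.pne hxy.toN1 hxy.toN2 hxy.toN2s h1 h2 h3 haw hcw hpac
  · -- Case II : A a w, A c z, A z w
    have hzc' : z ≠ c := fun he => no_self_arc hno c (he ▸ hcz)
    have hzw' : z ≠ w := fun he => no_self_arc hno w (he ▸ hzw)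
    have hzb : z ≠ b := fun he => arcAsymm hno harc h2 (he ▸ hcz)
    by_cases hwb : w = b
    · have hzwb : A z b := hwb ▸ hzw
      by_cases hzx : z = x
      · exact g4II_wb_zx hno harc a b c x y hab.ne ne_a_c ne_a_x ne_a_y hbc.ne ne_b_x ne_b_y ne_c_x ne_c_y hxy.ne hab.pne hab.toN1 hab.toN2 hab.toN2s hbc.pne hbc.toN1 hbc.toN2 hbc.toN2s hxy.pne hxy.toN1 hxy.toN2 hxy.toN2s h1 h2 h3 (hzx ▸ hcz) (hzx ▸ hzwb) hpac
      by_cases hzy : z = y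
      · exact g4II_wb_zy hno harc a b c x y hab.ne ne_a_c ne_a_x ne_a_y hbc.ne ne_b_x ne_b_y ne_c_x ne_c_y hxy.ne hab.pne hab.toN1 hab.toN2 hab.toN2s hbc.pne hbc.toN1 hbc.toN2 hbc.toN2s hxy.pne hxy.toN1 hxy.toN2 hxy.toN2s h1 h2 h3 (hzy ▸ hcz) (hzy ▸ hzwb) hpac
      exact g4II_wb hno harc a b c x y z hab.ne ne_a_c ne_a_x ne_a_y hza.symm hbc.ne ne_b_x ne_b_y hzb.symm ne_c_x ne_c_y hzc'.symm hxy.ne (fun he => hzx he.symm) (fun he => hzy he.symm) hab.pne hab.toN1 hab.toN2 hab.toN2s hbc.pne hbc.toN1 hbc.toN2 hbc.toN2s hxy.pne hxy.toN1 hxy.toN2 hxy.toN2s h1 h2 h3 hcz hzwb hpac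
    by_cases hwx : w = x
    · have haxx : A a x := hwx ▸ haw
      have hzxx : A z x := hwx ▸ hzw
      have hzy : z ≠ y := fun he => arcAsymm hno harc h3 (he ▸ hzxx)
      have hzx' : z ≠ x := fun he => hzw' (he.trans hwx.symm)
      exact g4II_wx hno harc a b c x y z hab.ne ne_a_c ne_a_x ne_a_y hza.symm hbc.ne ne_b_x ne_b_y hzb.symm ne_c_x ne_c_y hzc'.symm hxy.ne hzx'.symm hzy.symm hab.pne hab.toN1 hab.toN2 hab.toN2s hbc.pne hbc.toN1 hbc.toN2 hbc.toN2s hxy.pne hxy.toN1 hxy.toN2 hxy.toN2s h1 h2 h3 haxx hcz hzxx hpac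
    by_cases hwy : w = y
    · have hayy : A a y := hwy ▸ haw
      have hzyw : A z y := hwy ▸ hzw
      by_cases hzx : z = x
      · exact g4II_wy_zx hno harc a b c x y hab.ne ne_a_c ne_a_x ne_a_y hbc.ne ne_b_x ne_b_y ne_c_x ne_c_y hxy.ne hab.pne hab.toN1 hab.toN2 hab.toN2s hbc.pne hbc.toN1 hbc.toN2 hbc.toN2s hxy.pne hxy.toN1 hxy.toN2 hxy.toN2s h1 h2 h3 hayy (hzx ▸ hcz) hpac
      have hzy' : z ≠ y := fun he => hzw' (he.trans hwy.symm)
      exact g4II_wy hno harc a b c x y z hab.ne ne_a_c ne_a_x ne_a_y hza.symm hbc.ne ne_b_x ne_b_y hzb.symm ne_c_x ne_c_y hzc'.symm hxy.ne (fun he => hzx he.symm) hzy'.symm hab.pne hab.toN1 hab.toN2 hab.toN2s hbc.pne hbc.toN1 hbc.toN2 hbc.toN2s hxy.pne hxy.toN1 hxy.toN2 hxy.toN2s h1 h2 h3 hayy hcz hzyw hpac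
    by_cases hzx : z = x
    · exact g4II_zx hno harc a b c x y w hab.ne ne_a_c ne_a_x ne_a_y hwa.symm hbc.ne ne_b_x ne_b_y (fun he => hwb he.symm) ne_c_x ne_c_y hwc.symm hxy.ne (fun he => hwx he.symm) (fun he => hwy he.symm) hab.pne hab.toN1 hab.toN2 hab.toN2s hbc.pne hbc.toN1 hbc.toN2 hbc.toN2s hxy.pne hxy.toN1 hxy.toN2 hxy.toN2s h1 h2 h3 haw (hzx ▸ hcz) (hzx ▸ hzw) hpac
    by_cases hzy : z = y
    · exact g4II_zy hno harc a b c x y w hab.ne ne_a_c ne_a_x ne_a_y hwa.symm hbc.ne ne_b_x ne_b_y (fun he => hwb he.symm) ne_c_x ne_c_y hwc.symm hxy.ne (fun he => hwx he.symm) (fun he => hwy he.symm) hab.pne hab.toN1 hab.toN2 hab.toN2s hbc.pne hbc.toN1 hbc.toN2 hbc.toN2s hxy.pne hxy.toN1 hxy.toN2 hxy.toN2s h1 h2 h3 haw (hzy ▸ hcz) (hzy ▸ hzw) hpac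
    exact g4II hno harc a b c x y w z hab.ne ne_a_c ne_a_x ne_a_y hwa.symm hza.symm hbc.ne ne_b_x ne_b_y (fun he => hwb he.symm) hzb.symm ne_c_x ne_c_y hwc.symm hzc'.symm hxy.ne (fun he => hwx he.symm) (fun he => hzx he.symm) (fun he => hwy he.symm) (fun he => hzy he.symm) (fun he => hzw' he.symm) hab.pne hab.toN1 hab.toN2 hab.toN2s hbc.pne hbc.toN1 hbc.toN2 hbc.toN2s hxy.pne hxy.toN1 hxy.toN2 hxy.toN2s h1 h2 h3 haw hcz hzw hpac
  · -- Case I again (common prey, other disjunct order)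
    have hwb : w ≠ b := fun he => arcAsymm hno harc h2 (he ▸ hcw)
    by_cases hwx : w = x
    · exact g4I_x hno harc a b c x y hab.ne ne_a_c ne_a_x ne_a_y hbc.ne ne_b_x ne_b_y ne_c_x ne_c_y hxy.ne hab.pne hab.toN1 hab.toN2 hab.toN2s hbc.pne hbc.toN1 hbc.toN2 hbc.toN2s hxy.pne hxy.toN1 hxy.toN2 hxy.toN2s h1 h2 h3 (hwx ▸ haw) (hwx ▸ hcw) hpac
    by_cases hwy : w = y
    · exact g4I_y hno harc a b c x y hab.ne ne_a_c ne_a_x ne_a_y hbc.ne ne_b_x ne_b_y ne_c_x ne_c_y hxy.ne hab.pne hab.toN1 hab.toN2 hab.toN2s hbc.pne hbc.toN1 hbc.toN2 hbc.toN2s hxy.pne hxy.toN1 hxy.toN2 hxy.toN2s h1 h2 h3 (hwy ▸ haw) (hwy ▸ hcw) hpac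
    exact g4I hno harc a b c x y w hab.ne ne_a_c ne_a_x ne_a_y hwa.symm hbc.ne ne_b_x ne_b_y hwb.symm ne_c_x ne_c_y hwc.symm hxy.ne (fun he => hwx he.symm) (fun he => hwy he.symm) hab.pne hab.toN1 hab.toN2 hab.toN2s hbc.pne hbc.toN1 hbc.toN2 hbc.toN2s hxy.pne hxy.toN1 hxy.toN2 hxy.toN2s h1 h2 h3 haw hcw hpac
  · -- Case III : A c w, A a z, A z w
    have hza' : z ≠ a := fun he => no_self_arc hno a (he ▸ haz)
    have hzw' : z ≠ w := fun he => no_self_arc hno w (he ▸ hzw)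
    have hwb : w ≠ b := fun he => arcAsymm hno harc h2 (he ▸ hcw)
    by_cases hzb : z = b
    · have hbw : A b w := hzb ▸ hzw
      by_cases hwx : w = x
      · exact g4III_wx_zb hno harc a b c x y hab.ne ne_a_c ne_a_x ne_a_y hbc.ne ne_b_x ne_b_y ne_c_x ne_c_y hxy.ne hab.pne hab.toN1 hab.toN2 hab.toN2s hbc.pne hbc.toN1 hbc.toN2 hbc.toN2s hxy.pne hxy.toN1 hxy.toN2 hxy.toN2s h1 h2 h3 (hwx ▸ hcw) (hwx ▸ hbw) hpac
      by_cases hwy : w = y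
      · exact g4III_wy_zb hno harc a b c x y hab.ne ne_a_c ne_a_x ne_a_y hbc.ne ne_b_x ne_b_y ne_c_x ne_c_y hxy.ne hab.pne hab.toN1 hab.toN2 hab.toN2s hbc.pne hbc.toN1 hbc.toN2 hbc.toN2s hxy.pne hxy.toN1 hxy.toN2 hxy.toN2s h1 h2 h3 (hwy ▸ hcw) (hwy ▸ hbw) hpac
      exact g4III_zb hno harc a b c x y w hab.ne ne_a_c ne_a_x ne_a_y hwa.symm hbc.ne ne_b_x ne_b_y hwb.symm ne_c_x ne_c_y hwc.symm hxy.ne (fun he => hwx he.symm) (fun he => hwy he.symm) hab.pne hab.toN1 hab.toN2 hab.toN2s hbc.pne hbc.toN1 hbc.toN2 hbc.toN2s hxy.pne hxy.toN1 hxy.toN2 hxy.toN2s h1 h2 h3 hcw hbw hpac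
    by_cases hwx : w = x
    · have hcxx : A c x := hwx ▸ hcw
      have hzxx : A z x := hwx ▸ hzw
      have hzy : z ≠ y := fun he => arcAsymm hno harc h3 (he ▸ hzxx)
      have hzx' : z ≠ x := fun he => hzw' (he.trans hwx.symm)
      exact g4III_wx hno harc a b c x y z hab.ne ne_a_c ne_a_x ne_a_y hza'.symm hbc.ne ne_b_x ne_b_y (fun he => hzb he.symm) ne_c_x ne_c_y hzc.symm hxy.ne hzx'.symm hzy.symm hab.pne hab.toN1 hab.toN2 hab.toN2s hbc.pne hbc.toN1 hbc.toN2 hbc.toN2s hxy.pne hxy.toN1 hxy.toN2 hxy.toN2s h1 h2 h3 hcxx haz hzxx hpac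
    by_cases hwy : w = y
    · have hcyy : A c y := hwy ▸ hcw
      by_cases hzx : z = x
      · exact g4III_wy_zx hno harc a b c x y hab.ne ne_a_c ne_a_x ne_a_y hbc.ne ne_b_x ne_b_y ne_c_x ne_c_y hxy.ne hab.pne hab.toN1 hab.toN2 hab.toN2s hbc.pne hbc.toN1 hbc.toN2 hbc.toN2s hxy.pne hxy.toN1 hxy.toN2 hxy.toN2s h1 h2 h3 hcyy (hzx ▸ haz) hpac
      have hzy' : z ≠ y := fun he => hzw' (he.trans hwy.symm)
      exact g4III_wy hno harc a b c x y z hab.ne ne_a_c ne_a_x ne_a_y hza'.symm hbc.ne ne_b_x ne_b_y (fun he => hzb he.symm) ne_c_x ne_c_y hzc.symm hxy.ne (fun he => hzx he.symm) hzy'.symm hab.pne hab.toN1 hab.toN2 hab.toN2s hbc.pne hbc.toN1 hbc.toN2 hbc.toN2s hxy.pne hxy.toN1 hxy.toN2 hxy.toN2s h1 h2 h3 hcyy haz (hwy ▸ hzw) hpac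
    by_cases hzx : z = x
    · exact g4III_zx2 hno harc a b c x y w hab.ne ne_a_c ne_a_x ne_a_y hwa.symm hbc.ne ne_b_x ne_b_y hwb.symm ne_c_x ne_c_y hwc.symm hxy.ne (fun he => hwx he.symm) (fun he => hwy he.symm) hab.pne hab.toN1 hab.toN2 hab.toN2s hbc.pne hbc.toN1 hbc.toN2 hbc.toN2s hxy.pne hxy.toN1 hxy.toN2 hxy.toN2s h1 h2 h3 hcw (hzx ▸ haz) (hzx ▸ hzw) hpac
    by_cases hzy : z = y
    · exact g4III_zy2 hno harc a b c x y w hab.ne ne_a_c ne_a_x ne_a_y hwa.symm hbc.ne ne_b_x ne_b_y hwb.symm ne_c_x ne_c_y hwc.symm hxy.ne (fun he => hwx he.symm) (fun he => hwy he.symm) hab.pne hab.toN1 hab.toN2 hab.toN2s hbc.pne hbc.toN1 hbc.toN2 hbc.toN2s hxy.pne hxy.toN1 hxy.toN2 hxy.toN2s h1 h2 h3 hcw (hzy ▸ haz) (hzy ▸ hzw) hpac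
    exact g4III hno harc a b c x y w z hab.ne ne_a_c ne_a_x ne_a_y hwa.symm hza'.symm hbc.ne ne_b_x ne_b_y hwb.symm (fun he => hzb he.symm) ne_c_x ne_c_y hwc.symm hzc.symm hxy.ne (fun he => hwx he.symm) (fun he => hzx he.symm) (fun he => hwy he.symm) (fun he => hzy he.symm) (fun he => hzw' he.symm) hab.pne hab.toN1 hab.toN2 hab.toN2s hbc.pne hbc.toN1 hbc.toN2 hbc.toN2s hxy.pne hxy.toN1 hxy.toN2 hxy.toN2s h1 h2 h3 hcw haz hzw hpac

lemma dirC4 (hno : ∀ u v : V, p u = p v → ¬ A u v)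
    (harc : ∀ u v : V, p u ≠ p v → (A u v ∨ A v u) ∧ ¬ (A u v ∧ A v u))
    (htight : ∀ u v : V, u ≠ v → p u = p v → CompAdj A u v)
    (a b c d : V)
    (hab : NCP A p a b) (hbc : NCP A p b c) (hcd : NCP A p c d) (hda : NCP A p d a)
    (ne_a_c : a ≠ c) (ne_b_d : b ≠ d)
    (h1 : A a b) (h2 : A b c) (h3 : A c d) (h4 : A d a) : False := by
  have hnac : ¬ A a c := fun h => hab.toN1 c ne_a_c.symm hbc.ne.symm h h2
  have hnca : ¬ A c a := fun h => hcd.toN1 a ne_a_c hda.ne.symm h h4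
  have hpac : p a = p c := sameOfNoArcs harc hnac hnca
  have hnbd : ¬ A b d := fun h => hbc.toN1 d ne_b_d.symm hcd.ne.symm h h3
  have hndb : ¬ A d b := fun h => hda.toN1 b ne_b_d hab.ne.symm h h1
  have hpbd : p b = p d := sameOfNoArcs harc hnbd hndb
  obtain ⟨-, w, hwa, hwc, hcase⟩ := htight a c ne_a_c hpac
  rcases hcase with ⟨haw, hcw | ⟨z, hza, hcz, hzw⟩⟩ | ⟨hcw, haw | ⟨z, hzc, haz, hzw⟩⟩
  · -- common prey
    have hwb : w ≠ b := fun he => arcAsymm hno harc h2 (he ▸ hcw)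
    have hwd : w ≠ d := fun he => arcAsymm hno harc h4 (he ▸ haw)
    exact c4I hno harc a b c d w hab.ne ne_a_c hda.ne.symm hwa.symm hbc.ne ne_b_d hwb.symm hcd.ne hwc.symm hwd.symm hab.pne hab.toN1 hab.toN2 hab.toN2s hbc.pne hbc.toN1 hbc.toN2 hbc.toN2s hcd.pne hcd.toN1 hcd.toN2 hcd.toN2s hda.pne hda.toN1 hda.toN2 hda.toN2s h1 h2 h3 h4 haw hcw hpac hpbd
  · -- A a w, A c z, A z w
    have hzc' : z ≠ c := fun he => no_self_arc hno c (he ▸ hcz)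
    have hzw' : z ≠ w := fun he => no_self_arc hno w (he ▸ hzw)
    have hzb : z ≠ b := fun he => arcAsymm hno harc h2 (he ▸ hcz)
    by_cases hwb : w = b
    · have hzwb : A z b := hwb ▸ hzw
      have hzd : z ≠ d := fun he => hndb (he ▸ hzwb)
      exact c4II_wb hno harc a b c d z hab.ne ne_a_c hda.ne.symm hza.symm hbc.ne ne_b_d hzb.symm hcd.ne hzc'.symm hzd.symm hab.pne hab.toN1 hab.toN2 hab.toN2s hbc.pne hbc.toN1 hbc.toN2 hbc.toN2s hcd.pne hcd.toN1 hcd.toN2 hcd.toN2s hda.pne hda.toN1 hda.toN2 hda.toN2s h1 h2 h3 h4 hcz hzwb hpac hpbd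
    have hwd : w ≠ d := fun he => arcAsymm hno harc h4 (he ▸ haw)
    by_cases hzd : z = d
    · exact c4II_zd hno harc a b c d w hab.ne ne_a_c hda.ne.symm hwa.symm hbc.ne ne_b_d (fun he => hwb he.symm) hcd.ne hwc.symm hwd.symm hab.pne hab.toN1 hab.toN2 hab.toN2s hbc.pne hbc.toN1 hbc.toN2 hbc.toN2s hcd.pne hcd.toN1 hcd.toN2 hcd.toN2s hda.pne hda.toN1 hda.toN2 hda.toN2s h1 h2 h3 h4 haw (hzd ▸ hzw) hpac hpbd
    exact c4II hno harc a b c d w z hab.ne ne_a_c hda.ne.symm hwa.symm hza.symm hbc.ne ne_b_d (fun he => hwb he.symm) hzb.symm hcd.ne hwc.symm hzc'.symm hwd.symm (fun he => hzd he.symm) (fun he => hzw' he.symm) hab.pne hab.toN1 hab.toN2 hab.toN2s hbc.pne hbc.toN1 hbc.toN2 hbc.toN2s hcd.pne hcd.toN1 hcd.toN2 hcd.toN2s hda.pne hda.toN1 hda.toN2 hda.toN2s h1 h2 h3 h4 haw hcz hzw hpac hpbd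
  · -- common prey (other order)
    have hwb : w ≠ b := fun he => arcAsymm hno harc h2 (he ▸ hcw)
    have hwd : w ≠ d := fun he => arcAsymm hno harc h4 (he ▸ haw)
    exact c4I hno harc a b c d w hab.ne ne_a_c hda.ne.symm hwa.symm hbc.ne ne_b_d hwb.symm hcd.ne hwc.symm hwd.symm hab.pne hab.toN1 hab.toN2 hab.toN2s hbc.pne hbc.toN1 hbc.toN2 hbc.toN2s hcd.pne hcd.toN1 hcd.toN2 hcd.toN2s hda.pne hda.toN1 hda.toN2 hda.toN2s h1 h2 h3 h4 haw hcw hpac hpbd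
  · -- A c w, A a z, A z w : rotated by two
    have hza' : z ≠ a := fun he => no_self_arc hno a (he ▸ haz)
    have hzw' : z ≠ w := fun he => no_self_arc hno w (he ▸ hzw)
    have hzd : z ≠ d := fun he => arcAsymm hno harc h4 (he ▸ haz)
    by_cases hwd : w = d
    · have hzwd : A z d := hwd ▸ hzw
      have hzb : z ≠ b := fun he => hnbd (he ▸ hzwd)
      exact c4II_wb hno harc c d a b z hcd.ne ne_a_c.symm hbc.ne.symm hzc.symm hda.ne ne_b_d.symm hzd.symm hab.ne hza'.symm hzb.symm hcd.pne hcd.toN1 hcd.toN2 hcd.toN2s hda.pne hda.toN1 hda.toN2 hda.toN2s hab.pne hab.toN1 hab.toN2 hab.toN2s hbc.pne hbc.toN1 hbc.toN2 hbc.toN2s h3 h4 h1 h2 haz hzwd hpac.symm hpbd.symm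
    have hwb : w ≠ b := fun he => arcAsymm hno harc h2 (he ▸ hcw)
    by_cases hzb : z = b
    · exact c4II_zd hno harc c d a b w hcd.ne ne_a_c.symm hbc.ne.symm hwc.symm hda.ne ne_b_d.symm (fun he => hwd he.symm) hab.ne hwa.symm hwb.symm hcd.pne hcd.toN1 hcd.toN2 hcd.toN2s hda.pne hda.toN1 hda.toN2 hda.toN2s hab.pne hab.toN1 hab.toN2 hab.toN2s hbc.pne hbc.toN1 hbc.toN2 hbc.toN2s h3 h4 h1 h2 hcw (hzb ▸ hzw) hpac.symm hpbd.symm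
    exact c4II hno harc c d a b w z hcd.ne ne_a_c.symm hbc.ne.symm hwc.symm hzc.symm hda.ne ne_b_d.symm (fun he => hwd he.symm) (fun he => hzd he.symm) hab.ne hwa.symm hza'.symm hwb.symm (fun he => hzb he.symm) (fun he => hzw' he.symm) hcd.pne hcd.toN1 hcd.toN2 hcd.toN2s hda.pne hda.toN1 hda.toN2 hda.toN2s hab.pne hab.toN1 hab.toN2 hab.toN2s hbc.pne hbc.toN1 hbc.toN2 hbc.toN2s h3 h4 h1 h2 hcw haz hzw hpac.symm hpbd.symm


lemma g4o (hno : ∀ u v : V, p u = p v → ¬ A u v)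
    (harc : ∀ u v : V, p u ≠ p v → (A u v ∨ A v u) ∧ ¬ (A u v ∧ A v u))
    (htight : ∀ u v : V, u ≠ v → p u = p v → CompAdj A u v)
    (a b c x y : V)
    (hab : NCP A p a b) (hbc : NCP A p b c) (hxy : NCP A p x y)
    (ne_a_c : a ≠ c)
    (ne_a_x : a ≠ x) (ne_a_y : a ≠ y) (ne_b_x : b ≠ x) (ne_b_y : b ≠ y)
    (ne_c_x : c ≠ x) (ne_c_y : c ≠ y) : A a b ∧ A c b := by
  have key : ∀ x' y' : V, NCP A p x' y' → a ≠ x' → a ≠ y' → b ≠ x' → b ≠ y' →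
      c ≠ x' → c ≠ y' → A x' y' → A a b ∧ A c b := by
    intro x' y' hxy' nax nay nbx nby ncx ncy h3
    rcases (harc a b hab.pne).1 with h1 | h1 <;> rcases (harc b c hbc.pne).1 with h2 | h2
    · exact absurd (noDirPath hno harc htight a b c x' y' hab hbc hxy' ne_a_c
        nax nay nbx nby ncx ncy h1 h2 h3) not_false
    · exact ⟨h1, h2⟩
    · exact absurd (noBothOut hno harc htight a b c hab hbc ne_a_c h1 h2) not_false
    · exact absurd (noDirPath hno harc htight c b a x' y' hbc.symm hab.symm hxy' ne_a_c.symm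
        ncx ncy nbx nby nax nay h2 h1 h3) not_false
  rcases (harc x y hxy.pne).1 with h3 | h3
  · exact key x y hxy ne_a_x ne_a_y ne_b_x ne_b_y ne_c_x ne_c_y h3
  · exact key y x hxy.symm ne_a_y ne_a_x ne_b_y ne_b_x ne_c_y ne_c_x h3

lemma noP5 (hno : ∀ u v : V, p u = p v → ¬ A u v)
    (harc : ∀ u v : V, p u ≠ p v → (A u v ∨ A v u) ∧ ¬ (A u v ∧ A v u))
    (htight : ∀ u v : V, u ≠ v → p u = p v → CompAdj A u v)
    (v1 v2 v3 v4 v5 : V)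
    (h12 : NCP A p v1 v2) (h23 : NCP A p v2 v3) (h34 : NCP A p v3 v4) (h45 : NCP A p v4 v5)
    (ne13 : v1 ≠ v3) (ne14 : v1 ≠ v4) (ne15 : v1 ≠ v5)
    (ne24 : v2 ≠ v4) (ne25 : v2 ≠ v5) (ne35 : v3 ≠ v5) : False := by
  obtain ⟨-, k2⟩ := g4o hno harc htight v1 v2 v3 v4 v5 h12 h23 h45 ne13
    ne14 ne15 ne24 ne25 h34.ne ne35
  obtain ⟨k3, -⟩ := g4o hno harc htight v3 v4 v5 v1 v2 h34 h45 h12 ne35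
    ne13.symm h23.ne.symm ne14.symm ne24.symm ne15.symm ne25.symm
  exact noBothOut hno harc htight v2 v3 v4 h23 h34 ne24 k2 k3

lemma noC4 (hno : ∀ u v : V, p u = p v → ¬ A u v)
    (harc : ∀ u v : V, p u ≠ p v → (A u v ∨ A v u) ∧ ¬ (A u v ∧ A v u))
    (htight : ∀ u v : V, u ≠ v → p u = p v → CompAdj A u v)
    (a b c d : V)
    (hab : NCP A p a b) (hbc : NCP A p b c) (hcd : NCP A p c d) (hda : NCP A p d a)
    (ne_a_c : a ≠ c) (ne_b_d : b ≠ d) : False := by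
  rcases (harc a b hab.pne).1 with h1 | h1 <;> rcases (harc b c hbc.pne).1 with h2 | h2 <;>
    rcases (harc c d hcd.pne).1 with h3 | h3 <;> rcases (harc d a hda.pne).1 with h4 | h4 <;>
    first
      | exact noBothOut hno harc htight a b c hab hbc ne_a_c ‹A b a› ‹A b c›
      | exact noBothOut hno harc htight b c d hbc hcd ne_b_d ‹A c b› ‹A c d›
      | exact noBothOut hno harc htight c d a hcd hda ne_a_c.symm ‹A d c› ‹A d a›
      | exact noBothOut hno harc htight d a b hda hab ne_b_d.symm ‹A a d› ‹A a b›
      | exact dirC4 hno harc htight a b c d hab hbc hcd hda ne_a_c ne_b_d ‹A a b› ‹A b c› ‹A c d› ‹A d a›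
      | exact dirC4 hno harc htight a d c b hda.symm hcd.symm hbc.symm hab.symm ne_a_c
          ne_b_d.symm ‹A a d› ‹A d c› ‹A c b› ‹A b a›

/-- Key structural lemma: if the complement contains a path a-b-c-d, then every
complement edge meets {b,c}. -/
lemma keyML (hno : ∀ u v : V, p u = p v → ¬ A u v)
    (harc : ∀ u v : V, p u ≠ p v → (A u v ∨ A v u) ∧ ¬ (A u v ∧ A v u))
    (htight : ∀ u v : V, u ≠ v → p u = p v → CompAdj A u v)
    (a b c d x y : V)
    (hab : NCP A p a b) (hbc : NCP A p b c) (hcd : NCP A p c d) (hxy : NCP A p x y)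
    (ne_a_c : a ≠ c) (ne_a_d : a ≠ d) (ne_b_d : b ≠ d)
    (hxb : x ≠ b) (hxc : x ≠ c) (hyb : y ≠ b) (hyc : y ≠ c) : False := by
  by_cases hxa : x = a
  · subst hxa
    by_cases hyd : y = d
    · subst hyd
      exact noC4 hno harc htight x b c y hab hbc hcd hxy.symm ne_a_c ne_b_d
    · exact noP5 hno harc htight y x b c d hxy.symm hab hbc hcd hyb hyc hyd ne_a_c ne_a_d ne_b_d
  · by_cases hya : y = a
    · subst hya
      by_cases hxd : x = d
      · subst hxd
        exact noC4 hno harc htight y b c x hab hbc hcd hxy ne_a_c ne_b_d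
      · exact noP5 hno harc htight x y b c d hxy hab hbc hcd hxb hxc hxd ne_a_c ne_a_d ne_b_d
    · by_cases hxd : x = d
      · subst hxd
        exact noP5 hno harc htight a b c x y hab hbc hcd hxy ne_a_c (fun he => hxa he.symm)
          (fun he => hya he.symm) ne_b_d hyb.symm hyc.symm
      · by_cases hyd : y = d
        · subst hyd
          exact noP5 hno harc htight a b c y x hab hbc hcd hxy.symm ne_a_c
            (fun he => hya he.symm) (fun he => hxa he.symm) ne_b_d hxb.symm hxc.symm
        · obtain ⟨-, k2⟩ := g4o hno harc htight a b c x y hab hbc hxy ne_a_c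
            (fun he => hxa he.symm) (fun he => hya he.symm) hxb.symm hyb.symm hxc.symm hyc.symm
          obtain ⟨k3, -⟩ := g4o hno harc htight b c d x y hbc hcd hxy ne_b_d
            hxb.symm hyb.symm hxc.symm hyc.symm (fun he => hxd he.symm) (fun he => hyd he.symm)
          exact arcAsymm hno harc k3 k2

end Wrappers


section Classify
variable {V : Type*} [Fintype V] (G : SimpleGraph V)

/-- classification of triangle-free graphs with the key path property -/
lemma classifyGraph
    (hedge : ∃ u v, G.Adj u v)
    (tfree : ∀ u v w : V, G.Adj u v → G.Adj v w → G.Adj u w → False)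
    (ml : ∀ a b c d : V, G.Adj a b → G.Adj b c → G.Adj c d → a ≠ c → a ≠ d → b ≠ d →
      ∀ x y : V, G.Adj x y → x = b ∨ x = c ∨ y = b ∨ y = c) :
    IsStarPlusIsolated G ∨ IsDoubleStarPlusIsolated G ∨ IsDisjointStarsPlusIsolated G := by
  classical
  by_cases hp4 : ∃ a b c d : V, a ≠ c ∧ a ≠ d ∧ b ≠ d ∧ G.Adj a b ∧ G.Adj b c ∧ G.Adj c d
  · obtain ⟨a, b, c, d, hac, had, hbd, hab, hbc, hcd⟩ := hp4
    right; left
    refine ⟨b, c, hbc, ?_, ?_, ⟨a, hac, hab.symm⟩, ⟨d, hbd.symm, hcd⟩⟩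
    · intro x y hxy
      rcases ml a b c d hab hbc hcd hac had hbd x y hxy with h | h | h | h
      · exact Or.inl h
      · exact Or.inr (Or.inr (Or.inl h))
      · exact Or.inr (Or.inl h)
      · exact Or.inr (Or.inr (Or.inr h))
    · rintro x ⟨h1, h2⟩
      exact tfree b x c h1 h2.symm hbc
  · -- no P4
    have noP4 : ∀ a b c d : V, G.Adj a b → G.Adj b c → G.Adj c d →
        a = c ∨ a = d ∨ b = d := by
      intro a b c d hab hbc hcd
      by_contra hcon
      push_neg at hcon
      exact hp4 ⟨a, b, c, d, hcon.1, hcon.2.1, hcon.2.2, hab, hbc, hcd⟩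
    set TwoN : V → Prop := fun c => ∃ u v : V, u ≠ v ∧ G.Adj c u ∧ G.Adj c v with hTwoN
    have key1 : ∀ c x t : V, TwoN c → G.Adj c x → G.Adj x t → t = c := by
      intro c x t h2n hcx hxt
      by_contra htc
      obtain ⟨u, v, huv, hcu, hcv⟩ := h2n
      have hpick : ∃ u' : V, u' ≠ x ∧ G.Adj c u' := by
        by_cases hux : u = x
        · exact ⟨v, fun he => huv (hux.trans he.symm), hcv⟩
        · exact ⟨u, hux, hcu⟩
      obtain ⟨u', hu'x, hcu'⟩ := hpick
      rcases noP4 t x c u' hxt.symm hcx.symm hcu' with h | h | h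
      · exact htc h
      · subst h
        exact tfree c x t hcx hxt hcu'
      · exact hu'x.symm h
    by_cases hstar : ∃ cc : V, (∃ x, G.Adj cc x) ∧ ∀ x y : V, G.Adj x y → x = cc ∨ y = cc
    · exact Or.inl hstar
    · right; right
      set e : V ≃ Fin (Fintype.card V) := Fintype.equivFin V with he
      set Pend : V → V → Prop := fun c x => G.Adj c x ∧ ¬ TwoN c ∧ ¬ TwoN x with hPend
      set InC : V → Prop := fun c => TwoN c ∨ ∃ x, Pend c x ∧ e c < e x with hInC
      have fA : ∀ c : V, InC c → ∃ x, G.Adj c x := by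
        rintro c (⟨u, v, -, hcu, -⟩ | ⟨x, hp, -⟩)
        · exact ⟨u, hcu⟩
        · exact ⟨x, hp.1⟩
      have fB : ∀ x y : V, G.Adj x y → InC x ∨ InC y := by
        intro x y hxy
        by_cases h2x : TwoN x
        · exact Or.inl (Or.inl h2x)
        by_cases h2y : TwoN y
        · exact Or.inr (Or.inl h2y)
        have hne : e x ≠ e y := fun h => hxy.ne (e.injective h)
        rcases hne.lt_or_gt with h | h
        · exact Or.inl (Or.inr ⟨y, ⟨hxy, h2x, h2y⟩, h⟩)
        · exact Or.inr (Or.inr ⟨x, ⟨hxy.symm, h2y, h2x⟩, h⟩)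
      have fC : ∀ x y : V, G.Adj x y → InC x → InC y → False := by
        intro x y hxy hx hy
        rcases hx with h2x | ⟨s, hps, hlts⟩
        · rcases hy with h2y | ⟨t, hpt, hltt⟩
          · -- both TwoN : build P4
            obtain ⟨u, v, huv, hxu, hxv⟩ := h2x
            have hpick : ∃ u' : V, u' ≠ y ∧ G.Adj x u' := by
              by_cases huy : u = y
              · exact ⟨v, fun he => huv (huy.trans he.symm), hxv⟩
              · exact ⟨u, huy, hxu⟩
            obtain ⟨u', hu'y, hxu'⟩ := hpick
            obtain ⟨w1, w2, hw12, hyw1, hyw2⟩ := h2y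
            have hpick2 : ∃ v' : V, v' ≠ x ∧ G.Adj y v' := by
              by_cases hwx : w1 = x
              · exact ⟨w2, fun he => hw12 (hwx.trans he.symm), hyw2⟩
              · exact ⟨w1, hwx, hyw1⟩
            obtain ⟨v', hv'x, hyv'⟩ := hpick2
            rcases noP4 u' x y v' hxu'.symm hxy hyv' with h | h | h
            · exact hu'y h
            · subst h
              exact tfree x y u' hxy hyv' hxu'
            · exact hv'x h.symm
          · -- y pendant: its unique neighbor t must be x, contradicting TwoN x
            by_cases htx : t = x
            · exact hpt.2.2 (htx ▸ h2x)
            · exact hpt.2.1 ⟨t, x, fun he => htx he, hpt.1, hxy.symm⟩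
        · rcases hy with h2y | ⟨t, hpt, hltt⟩
          · by_cases hsy : s = y
            · exact hps.2.2 (hsy ▸ h2y)
            · exact hps.2.1 ⟨s, y, fun he => hsy he, hps.1, hxy⟩
          · -- both pendant
            have hsy : s = y := by
              by_contra hsy
              exact hps.2.1 ⟨s, y, fun he => hsy he, hps.1, hxy⟩
            have htx : t = x := by
              by_contra htx
              exact hpt.2.1 ⟨t, x, fun he => htx he, hpt.1, hxy.symm⟩
            subst hsy; subst htx
            exact absurd hltt (not_lt.mpr (le_of_lt hlts))
      set C : Finset V := Finset.univ.filter InC with hC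
      have memC : ∀ c : V, c ∈ C ↔ InC c := by
        intro c; simp [hC]
      obtain ⟨u0, v0, h0⟩ := hedge
      obtain ⟨c0, hc0⟩ : ∃ c0 : V, InC c0 := by
        rcases fB u0 v0 h0 with h | h
        · exact ⟨u0, h⟩
        · exact ⟨v0, h⟩
      have hcard : 2 ≤ C.card := by
        by_contra hlt
        push_neg at hlt
        have hone : ∀ x ∈ C, ∀ y ∈ C, x = y :=
          Finset.card_le_one.mp (Nat.lt_succ_iff.mp hlt)
        refine hstar ⟨c0, fA c0 hc0, ?_⟩
        intro x y hxy
        rcases fB x y hxy with h | h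
        · exact Or.inl (hone x ((memC x).mpr h) c0 ((memC c0).mpr hc0))
        · exact Or.inr (hone y ((memC y).mpr h) c0 ((memC c0).mpr hc0))
      refine ⟨C, hcard, ?_, ?_, ?_⟩
      · intro c hc
        exact fA c ((memC c).mp hc)
      · intro x y hxy
        rcases fB x y hxy with h | h
        · exact Or.inl ⟨(memC x).mpr h, fun hyC => fC x y hxy h ((memC y).mp hyC)⟩
        · exact Or.inr ⟨fun hxC => fC x y hxy ((memC x).mp hxC) h, (memC y).mpr h⟩
      · intro x c1 hc1 c2 hc2 h1 h2
        by_contra hne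
        have h2x : TwoN x := ⟨c1, c2, hne, h1, h2⟩
        exact fC x c1 h1 (Or.inl h2x) ((memC c1).mp hc1)

end Classify

/-- Let `D` be a tight multipartite tournament whose maximum
anti-`{1,2}`-competing sets have size exactly two. Then the complement of `C_{1,2}(D)` is
(A) a star plus isolated vertices, (B) a double-star plus isolated vertices, (C) a
disjoint union of at least two stars plus isolated vertices, or (D) a caterpillar having
at least one vertex of degree 2, plus isolated vertices. -/

theorem stmt15 {V ι : Type*} [Fintype V] [Fintype ι]
    (A : V → V → Prop) (p : V → ι) (hD : IsMultipartiteTournament A p)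
    (htight : IsTight A p)
    (hex : ∃ u v : V, u ≠ v ∧ ¬ (compGraph A).Adj u v)
    (hmax : ∀ S : Finset V, (∀ x ∈ S, ∀ y ∈ S, x ≠ y → ¬ (compGraph A).Adj x y) →
      S.card ≤ 2) :
    IsStarPlusIsolated (compGraph A)ᶜ ∨
    IsDoubleStarPlusIsolated (compGraph A)ᶜ ∨
    IsDisjointStarsPlusIsolated (compGraph A)ᶜ ∨
    (IsCaterpillarPlusIsolated (compGraph A)ᶜ ∧
      ∃ x : V, (((compGraph A)ᶜ).neighborSet x).ncard = 2) := by
  classical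
  obtain ⟨-, -, hno, harc⟩ := hD
  have htight' : ∀ u v : V, u ≠ v → p u = p v → CompAdj A u v := htight
  have unfoldAdj : ∀ {u v : V}, ((compGraph A)ᶜ).Adj u v → u ≠ v ∧ ¬ CompAdj A u v := by
    intro u v h
    exact ((compGraph A).compl_adj u v).mp h
  have toNCP : ∀ {u v : V}, ((compGraph A)ᶜ).Adj u v → NCP A p u v := by
    intro u v h
    obtain ⟨hne, hnc⟩ := unfoldAdj h
    exact ⟨hne, fun he => hnc (htight' u v hne he), hnc⟩
  have hedge : ∃ u v : V, ((compGraph A)ᶜ).Adj u v := by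
    obtain ⟨u, v, hne, hnadj⟩ := hex
    exact ⟨u, v, ((compGraph A).compl_adj u v).mpr ⟨hne, hnadj⟩⟩
  have tfree : ∀ u v w : V, ((compGraph A)ᶜ).Adj u v → ((compGraph A)ᶜ).Adj v w →
      ((compGraph A)ᶜ).Adj u w → False := by
    intro u v w h1 h2 h3
    have hpair : ∀ x ∈ ({u, v, w} : Finset V), ∀ y ∈ ({u, v, w} : Finset V), x ≠ y →
        ¬ (compGraph A).Adj x y := by
      intro x hx y hy hxy
      simp only [Finset.mem_insert, Finset.mem_singleton] at hx hy
      rcases hx with rfl | rfl | rfl <;> rcases hy with rfl | rfl | rfl <;>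
        first
          | exact absurd rfl hxy
          | exact (unfoldAdj h1).2
          | exact (unfoldAdj h1.symm).2
          | exact (unfoldAdj h2).2
          | exact (unfoldAdj h2.symm).2
          | exact (unfoldAdj h3).2
          | exact (unfoldAdj h3.symm).2
    have hcard : ({u, v, w} : Finset V).card = 3 := by
      rw [Finset.card_insert_of_notMem (by simp [h1.ne, h3.ne]),
        Finset.card_insert_of_notMem (by simp [h2.ne]), Finset.card_singleton]
    have := hmax {u, v, w} hpair
    rw [hcard] at this
    omega
  have ml : ∀ a b c d : V, ((compGraph A)ᶜ).Adj a b → ((compGraph A)ᶜ).Adj b c →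
      ((compGraph A)ᶜ).Adj c d → a ≠ c → a ≠ d → b ≠ d →
      ∀ x y : V, ((compGraph A)ᶜ).Adj x y → x = b ∨ x = c ∨ y = b ∨ y = c := by
    intro a b c d hab hbc hcd hac had hbd x y hxy
    by_contra hcon
    push_neg at hcon
    obtain ⟨hxb, hxc, hyb, hyc⟩ := hcon
    exact keyML hno harc htight' a b c d x y (toNCP hab) (toNCP hbc) (toNCP hcd) (toNCP hxy)
      hac had hbd hxb hxc hyb hyc
  rcases classifyGraph ((compGraph A)ᶜ) hedge tfree ml with h | h | h
  · exact Or.inl h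
  · exact Or.inr (Or.inl h)
  · exact Or.inr (Or.inr (Or.inl h))
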